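/- arXiv:2601.15173 — 3 statements merged into one kernel-verified Lean document; each statement's English description precedes it below -/
import Mathlib

section
/- Let K ⊆ ℝ^d be a proper locally anti-blocking body and i ∈ {1,…,d}. Then μ_i(K) = max { μ(K ∩ L_I) : I ⊆ {1,…,d}, |I| = i }, where the covering radius μ(K ∩ L_I) is computed in L_I with respect to the lattice ℤ^d ∩ L_I. -/
open scoped Pointwise

/-- The `i`-th covering minimum of `K` with respect to a lattice given as a set `L`. -/
noncomputable def covMin {E : Type*} [AddCommGroup E] [Module ℝ E]
    (i : ℕ) (K L : Set E) : ℝ :=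
  sInf {μ : ℝ | 0 ≤ μ ∧ ∀ U : AffineSubspace ℝ E, (U : Set E).Nonempty →
    Module.finrank ℝ U.direction = Module.finrank ℝ E - i →
    ((μ • K + L) ∩ (U : Set E)).Nonempty}

/-- The covering radius of `K` with respect to a lattice given as a set `L`. -/
noncomputable def covRad {E : Type*} [AddCommGroup E] [Module ℝ E]
    (K L : Set E) : ℝ :=
  sInf {μ : ℝ | 0 ≤ μ ∧ μ • K + L = Set.univ}

/-- A convex body: a compact convex set with nonempty interior (full-dimensional). -/
def IsConvexBody {E : Type*} [AddCommGroup E] [Module ℝ E] [TopologicalSpace E]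
    (K : Set E) : Prop :=
  Convex ℝ K ∧ IsCompact K ∧ (interior K).Nonempty

/-- The integer lattice `ℤ^d` inside `ℝ^d`. -/
def intLat (d : ℕ) : Set (Fin d → ℝ) := {x | ∀ j, ∃ m : ℤ, x j = (m : ℝ)}

/-- The coordinate subspace `L_I = span{e_j : j ∈ I}` of `ℝ^d`. -/
def coordSubspace (d : ℕ) (I : Finset (Fin d)) : Submodule ℝ (Fin d → ℝ) where
  carrier := {x | ∀ j ∉ I, x j = 0}
  add_mem' := by
    intro a b ha hb j hj
    simp [ha j hj, hb j hj]
  zero_mem' := by intro j hj; rfl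
  smul_mem' := by
    intro c x hx j hj
    simp [hx j hj]

/-- The orthogonal projection of `ℝ^d` onto the coordinate subspace `L_I`. -/
def coordProj (d : ℕ) (I : Finset (Fin d)) (x : Fin d → ℝ) : Fin d → ℝ :=
  fun j => if j ∈ I then x j else 0

/-- `K` is locally anti-blocking if for every coordinate subspace the intersection and
orthogonal projection of `K` coincide. -/
def IsLocallyAntiBlocking {d : ℕ} (K : Set (Fin d → ℝ)) : Prop :=
  ∀ I : Finset (Fin d), K ∩ (coordSubspace d I : Set (Fin d → ℝ)) = coordProj d I '' K

/-! ### Auxiliary lemmas -/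

/-- The standard basis vectors of `ℝ^d`. -/
noncomputable def stdb (d : ℕ) (j : Fin d) : Fin d → ℝ := Pi.single j 1

lemma stdb_eq (d : ℕ) : stdb d = fun j => Pi.basisFun ℝ (Fin d) j := by
  classical
  funext j; simp [stdb]

lemma stdb_injective (d : ℕ) : Function.Injective (stdb d) := by
  intro a b hab
  by_contra h
  have := congrFun hab a
  simp [stdb, Pi.single_apply, h] at this

lemma stdb_li (d : ℕ) : LinearIndependent ℝ (stdb d) := by
  rw [stdb_eq]; exact (Pi.basisFun ℝ (Fin d)).linearIndependent

lemma stdb_span (d : ℕ) : Submodule.span ℝ (Set.range (stdb d)) = ⊤ := by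
  rw [stdb_eq]; exact (Pi.basisFun ℝ (Fin d)).span_eq

lemma coordSubspace_eq_span (d : ℕ) (J : Finset (Fin d)) :
    coordSubspace d J = Submodule.span ℝ (stdb d '' ↑J) := by
  apply le_antisymm
  · intro x hx
    have : x = ∑ j ∈ J, x j • stdb d j := by
      ext k
      by_cases hk : k ∈ J
      · rw [Finset.sum_apply]
        rw [Finset.sum_eq_single k]
        · simp [stdb]
        · intro b _ hb; simp [stdb, Pi.single_apply, hb]
        · intro h; exact absurd hk h
      · rw [Finset.sum_apply, hx k hk]
        apply (Finset.sum_eq_zero _).symm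
        intro b hb
        have : b ≠ k := fun h => hk (h ▸ hb)
        simp [stdb, Pi.single_apply, this]
    rw [this]
    exact Submodule.sum_mem _ fun j hj => Submodule.smul_mem _ _
      (Submodule.subset_span ⟨j, hj, rfl⟩)
  · rw [Submodule.span_le]
    rintro _ ⟨j, hj, rfl⟩
    intro k hk
    have : j ≠ k := fun h => hk (h ▸ hj)
    simp [stdb, Pi.single_apply, this.symm]

lemma finrank_coordSubspace (d : ℕ) (J : Finset (Fin d)) :
    Module.finrank ℝ (coordSubspace d J) = J.card := by
  classical
  rw [coordSubspace_eq_span]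
  have hli : LinearIndependent ℝ ((↑) : (stdb d '' ↑J) → (Fin d → ℝ)) :=
    LinearIndepOn.mono (v := id) (stdb_li d).linearIndepOn_id (Set.image_subset_range _ _)
  haveI : Fintype (stdb d '' ↑J) := Set.fintypeImage _ _
  rw [finrank_span_set_eq_card hli]
  rw [Set.toFinset_image]
  rw [Finset.card_image_of_injective _ (stdb_injective d)]
  simp

/-- Any subspace of codimension `i` admits a complementary coordinate subspace `L_I`
with `|I| = i`. -/
lemma exists_coord_compl {d i : ℕ} (hid : i ≤ d) (W : Submodule ℝ (Fin d → ℝ))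
    (hW : Module.finrank ℝ W = d - i) :
    ∃ I : Finset (Fin d), I.card = i ∧ IsCompl (coordSubspace d I) W := by
  classical
  obtain ⟨s, hsW, hspan, hli⟩ := exists_linearIndependent ℝ (W : Set (Fin d → ℝ))
  rw [Submodule.span_eq] at hspan
  obtain ⟨b, hbt, hsb, htb, hbli⟩ := exists_linearIndepOn_id_extension hli
    (Set.subset_union_left (t := Set.range (stdb d)))
  replace hbli : LinearIndependent ℝ ((↑) : b → (Fin d → ℝ)) := hbli
  have hbspan : Submodule.span ℝ b = ⊤ := by
    apply top_le_iff.mp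
    calc (⊤ : Submodule ℝ (Fin d → ℝ)) = Submodule.span ℝ (Set.range (stdb d)) :=
          (stdb_span d).symm
      _ ≤ Submodule.span ℝ (s ∪ Set.range (stdb d)) := Submodule.span_mono Set.subset_union_right
      _ ≤ Submodule.span ℝ b := Submodule.span_le.mpr htb
  have hbfin : b.Finite := hbli.setFinite
  have hsfin : s.Finite := hbfin.subset hsb
  haveI : Fintype b := hbfin.fintype
  haveI : Fintype s := hsfin.fintype
  have hbcard : b.toFinset.card = d := by
    have h1 := finrank_span_set_eq_card hbli
    rw [hbspan, finrank_top, Module.finrank_fintype_fun_eq_card] at h1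
    simpa using h1.symm
  have hscard : s.toFinset.card = d - i := by
    have h1 := finrank_span_set_eq_card hli
    rw [hspan, hW] at h1
    exact h1.symm
  set I : Finset (Fin d) := Finset.univ.filter (fun j => stdb d j ∈ b ∧ stdb d j ∉ s) with hI
  have himg : stdb d '' ↑I = b \ s := by
    ext v
    constructor
    · rintro ⟨j, hj, rfl⟩
      rw [hI] at hj
      simp only [Finset.coe_filter, Set.mem_setOf_eq, Finset.mem_filter] at hj
      exact ⟨hj.2.1, hj.2.2⟩
    · rintro ⟨hvb, hvs⟩
      have : v ∈ s ∪ Set.range (stdb d) := hbt hvb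
      rcases this with hv | ⟨j, rfl⟩
      · exact absurd hv hvs
      · exact ⟨j, by simp [hI, hvb, hvs], rfl⟩
  have hIcard : I.card = i := by
    have h1 : (I.image (stdb d)).card = I.card :=
      Finset.card_image_of_injective _ (stdb_injective d)
    have h2 : (I.image (stdb d) : Set (Fin d → ℝ)) = b \ s := by
      rw [Finset.coe_image]; exact himg
    have h3 : I.image (stdb d) = b.toFinset \ s.toFinset := by
      apply Finset.coe_injective
      rw [h2]; simp
    rw [h3] at h1
    rw [Finset.card_sdiff_of_subset (by intro x hx; simp only [Set.mem_toFinset] at *; exact hsb hx)] at h1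
    rw [hbcard, hscard] at h1
    omega
  have hspanI : coordSubspace d I = Submodule.span ℝ (b \ s) := by
    rw [coordSubspace_eq_span, himg]
  refine ⟨I, hIcard, ?_, ?_⟩
  · rw [hspanI, ← hspan]
    have hdisj : Disjoint ((Subtype.val ⁻¹' (b \ s)) : Set b) (Subtype.val ⁻¹' s) :=
      Disjoint.preimage _ (Set.disjoint_sdiff_left)
    have h2 := hbli.disjoint_span_image hdisj
    rwa [Set.image_preimage_eq_inter_range, Set.image_preimage_eq_inter_range,
      Subtype.range_coe, Set.inter_eq_left.mpr Set.diff_subset,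
      Set.inter_eq_left.mpr hsb] at h2
  · rw [codisjoint_iff, hspanI, ← hspan, ← Submodule.span_union,
      Set.diff_union_self, Set.union_eq_self_of_subset_right hsb, hbspan]

/-- For a convex set containing `0`, dilates are monotone. -/
lemma smul_set_mono_of_convex {E : Type*} [AddCommGroup E] [Module ℝ E] {K : Set E}
    (hconv : Convex ℝ K) (h0 : (0:E) ∈ K) {a b : ℝ} (ha : 0 ≤ a) (hab : a ≤ b) :
    a • K ⊆ b • K := by
  rintro _ ⟨k, hk, rfl⟩
  rcases eq_or_lt_of_le (ha.trans hab) with hb | hb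
  · have ha0 : a = 0 := le_antisymm (hab.trans hb.symm.le) ha
    exact ⟨k, hk, by rw [← hb, ha0]⟩
  · refine ⟨(a/b) • k, ?_, ?_⟩
    · have := hconv hk h0 (div_nonneg ha hb.le) (show (0:ℝ) ≤ 1 - a/b by have := (div_le_one hb).mpr hab; linarith)
        (by ring)
      simpa using this
    · show b • ((a/b) • k) = a • k
      rw [smul_smul, mul_div_cancel₀ _ (ne_of_gt hb)]

/-- **Corollary (locally anti-blocking bodies).** For a proper locally anti-blocking body `K`,
`μ_i(K) = max { μ(K ∩ L_I) : |I| = i }`, the covering radii being computed in `L_I` with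
respect to the lattice `ℤ^d ∩ L_I`. -/
theorem covMin_locallyAntiBlocking
    (d i : ℕ) (hi : 1 ≤ i) (hid : i ≤ d)
    (K : Set (Fin d → ℝ)) (hK : IsConvexBody K)
    (hproper : (0 : Fin d → ℝ) ∈ interior K)
    (hLAB : IsLocallyAntiBlocking K) :
    covMin i K (intLat d) =
      sSup {x : ℝ | ∃ I : Finset (Fin d), I.card = i ∧
        x = covRad (Subtype.val ⁻¹' K : Set (coordSubspace d I))
              (Subtype.val ⁻¹' intLat d : Set (coordSubspace d I))} := by
  classical
  obtain ⟨hconv, -, -⟩ := hK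
  have h0K : (0 : Fin d → ℝ) ∈ K := interior_subset hproper
  obtain ⟨ε, hε, hball⟩ : ∃ ε > 0, Metric.ball (0 : Fin d → ℝ) ε ⊆ K :=
    Metric.mem_nhds_iff.mp (mem_interior_iff_mem_nhds.mp hproper)
  have hdE : Module.finrank ℝ (Fin d → ℝ) = d := by
    rw [Module.finrank_fintype_fun_eq_card, Fintype.card_fin]
  -- the set defining the covering minimum
  set A : Set ℝ := {μ : ℝ | 0 ≤ μ ∧ ∀ U : AffineSubspace ℝ (Fin d → ℝ), (U : Set (Fin d → ℝ)).Nonempty →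
    Module.finrank ℝ U.direction = Module.finrank ℝ (Fin d → ℝ) - i →
    ((μ • K + intLat d) ∩ (U : Set (Fin d → ℝ))).Nonempty} with hA
  -- the sets defining the covering radii
  set C : Finset (Fin d) → Set ℝ := fun I =>
    {μ : ℝ | 0 ≤ μ ∧ μ • (Subtype.val ⁻¹' K : Set (coordSubspace d I)) +
      (Subtype.val ⁻¹' intLat d) = Set.univ} with hC
  set B : Set ℝ := {x : ℝ | ∃ I : Finset (Fin d), I.card = i ∧ x = sInf (C I)} with hB
  have hcovRad : ∀ I : Finset (Fin d),
      covRad (Subtype.val ⁻¹' K : Set (coordSubspace d I))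
        (Subtype.val ⁻¹' intLat d : Set (coordSubspace d I)) = sInf (C I) := fun I => rfl
  have hgoal : covMin i K (intLat d) = sInf A := rfl
  have hBeq : {x : ℝ | ∃ I : Finset (Fin d), I.card = i ∧
      x = covRad (Subtype.val ⁻¹' K : Set (coordSubspace d I))
        (Subtype.val ⁻¹' intLat d : Set (coordSubspace d I))} = B := by
    rw [hB]
    simp only [hcovRad]
  rw [hgoal, hBeq]
  -- universal covering constant
  set μ₀ : ℝ := 2 / ε with hμ₀
  have hμ₀pos : 0 < μ₀ := by positivity
  have hround : ∀ x : Fin d → ℝ, ‖x - (fun j => ((round (x j) : ℤ) : ℝ))‖ ≤ 1/2 := by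
    intro x
    rw [pi_norm_le_iff_of_nonneg (by norm_num)]
    intro j
    simp only [Pi.sub_apply, Real.norm_eq_abs]
    exact abs_sub_round (x j)
  have hkey : ∀ x : Fin d → ℝ, (ε/2) • (x - (fun j => ((round (x j) : ℤ) : ℝ))) ∈ K := by
    intro x
    apply hball
    rw [Metric.mem_ball, dist_zero_right, norm_smul, Real.norm_eq_abs,
      abs_of_pos (by positivity : (0:ℝ) < ε/2)]
    calc ε/2 * ‖x - (fun j => ((round (x j) : ℤ) : ℝ))‖ ≤ ε/2 * (1/2) := by
          apply mul_le_mul_of_nonneg_left (hround x) (by positivity)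
      _ < ε := by linarith
  have hsmul_back : ∀ y : Fin d → ℝ, μ₀ • ((ε/2) • y) = y := by
    intro y
    rw [smul_smul, hμ₀]
    rw [div_mul_div_comm]
    rw [show (2 * ε) / (ε * 2) = 1 by rw [mul_comm]; exact div_self (by positivity)]
    rw [one_smul]
  -- `μ₀` covers the whole space
  have hcover : ∀ x : Fin d → ℝ, x ∈ μ₀ • K + intLat d := by
    intro x
    set z : Fin d → ℝ := fun j => ((round (x j) : ℤ) : ℝ) with hz
    refine ⟨μ₀ • ((ε/2) • (x - z)), ⟨(ε/2) • (x - z), hkey x, rfl⟩, z, fun j => ⟨round (x j), rfl⟩, ?_⟩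
    rw [hsmul_back]
    show x - z + z = x
    exact sub_add_cancel x z
  -- `A` is nonempty
  have hA_ne : A.Nonempty := by
    refine ⟨μ₀, hμ₀pos.le, fun U hU _ => ?_⟩
    obtain ⟨u, hu⟩ := hU
    exact ⟨u, hcover u, hu⟩
  have hA_bdd : BddBelow A := ⟨0, fun μ hμ => hμ.1⟩
  -- each `C I` is nonempty
  have hC_ne : ∀ I : Finset (Fin d), (C I).Nonempty := by
    intro I
    refine ⟨μ₀, hμ₀pos.le, Set.eq_univ_iff_forall.mpr fun x => ?_⟩
    set z : Fin d → ℝ := fun j => ((round ((x : Fin d → ℝ) j) : ℤ) : ℝ) with hz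
    have hzL : z ∈ coordSubspace d I := by
      intro j hj
      have : (x : Fin d → ℝ) j = 0 := x.2 j hj
      simp [hz, this]
    set zs : coordSubspace d I := ⟨z, hzL⟩ with hzs
    set ks : coordSubspace d I := (ε/2) • (x - zs) with hks
    have hksK : (ks : Fin d → ℝ) ∈ K := by
      have : (ks : Fin d → ℝ) = (ε/2) • ((x : Fin d → ℝ) - z) := by
        rw [hks]; push_cast; rfl
      rw [this]
      exact hkey _
    refine ⟨μ₀ • ks, ⟨ks, hksK, rfl⟩, zs, fun j => ⟨round ((x : Fin d → ℝ) j), rfl⟩, ?_⟩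
    apply Subtype.ext
    push_cast
    rw [hks]
    push_cast
    rw [hsmul_back]
    abel
  have hC_bdd : ∀ I : Finset (Fin d), BddBelow (C I) := fun I => ⟨0, fun μ hμ => hμ.1⟩
  have hC_nonneg : ∀ I : Finset (Fin d), 0 ≤ sInf (C I) := fun I =>
    le_csInf (hC_ne I) fun μ hμ => hμ.1
  -- `B` is nonempty and bounded above
  obtain ⟨I₀, -, hI₀card⟩ := @Finset.exists_subset_card_eq _ (Finset.univ : Finset (Fin d)) i
    (by simpa using hid)
  have hB_ne : B.Nonempty := ⟨sInf (C I₀), I₀, hI₀card, rfl⟩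
  have hB_bdd : BddAbove B := by
    apply Set.Finite.bddAbove
    apply Set.Finite.subset (Set.finite_range (fun I : Finset (Fin d) => sInf (C I)))
    rintro x ⟨I, -, rfl⟩
    exact ⟨I, rfl⟩
  -- Direction 1: A ⊆ C I for every I with |I| = i (uses LAB)
  have hAC : ∀ I : Finset (Fin d), I.card = i → A ⊆ C I := by
    intro I hcard μ hμ
    refine ⟨hμ.1, Set.eq_univ_iff_forall.mpr fun x => ?_⟩
    set U : AffineSubspace ℝ (Fin d → ℝ) :=
      AffineSubspace.mk' (x : Fin d → ℝ) (coordSubspace d Iᶜ) with hU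
    have hUne : (U : Set (Fin d → ℝ)).Nonempty := ⟨x, AffineSubspace.self_mem_mk' _ _⟩
    have hUdim : Module.finrank ℝ U.direction = Module.finrank ℝ (Fin d → ℝ) - i := by
      rw [hU, AffineSubspace.direction_mk', finrank_coordSubspace, hdE,
        Finset.card_compl, hcard, Fintype.card_fin]
    obtain ⟨y, hymem, hyU⟩ := hμ.2 U hUne hUdim
    obtain ⟨w, ⟨k, hk, rfl⟩, z, hz, hyzw⟩ := hymem
    have hyx : ∀ j ∈ I, y j = (x : Fin d → ℝ) j := by
      intro j hj
      have := (AffineSubspace.mem_mk').mp hyU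
      have h2 : (y - (x : Fin d → ℝ)) j = 0 := this j (by simp [hj])
      simp only [Pi.sub_apply, sub_eq_zero] at h2
      exact h2
    have hkI : coordProj d I k ∈ K ∩ (coordSubspace d I : Set (Fin d → ℝ)) := by
      rw [hLAB I]; exact ⟨k, hk, rfl⟩
    have hzI : coordProj d I z ∈ coordSubspace d I := by
      intro j hj; simp [coordProj, hj]
    refine ⟨μ • (⟨coordProj d I k, hkI.2⟩ : coordSubspace d I),
      ⟨⟨coordProj d I k, hkI.2⟩, hkI.1, rfl⟩,
      ⟨coordProj d I z, hzI⟩, ?_, ?_⟩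
    · intro j
      by_cases hj : j ∈ I
      · simpa [coordProj, hj] using hz j
      · exact ⟨0, by simp [coordProj, hj]⟩
    · apply Subtype.ext
      push_cast
      funext j
      by_cases hj : j ∈ I
      · have : y j = μ • k j + z j := by rw [← hyzw]; rfl
        simp only [Pi.add_apply, Pi.smul_apply, coordProj, hj, if_true]
        rw [← hyx j hj, this]
      · have : (x : Fin d → ℝ) j = 0 := x.2 j hj
        simp [coordProj, hj, this]
  -- Direction 2 key claim
  have hclaim : ∀ μ : ℝ, 0 ≤ μ → (∀ I : Finset (Fin d), I.card = i →
      ∃ μ' ∈ C I, μ' ≤ μ) → μ ∈ A := by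
    intro μ hμ0 hμ
    refine ⟨hμ0, fun U hUne hUdim => ?_⟩
    obtain ⟨I, hcard, hcompl⟩ := exists_coord_compl hid U.direction (by rw [hUdim, hdE])
    obtain ⟨μ', hμ'C, hμ'le⟩ := hμ I hcard
    obtain ⟨u, hu⟩ := hUne
    set q := (coordSubspace d I).linearProjOfIsCompl U.direction hcompl with hq
    have hxuniv := hμ'C.2
    have : q u ∈ μ' • (Subtype.val ⁻¹' K : Set (coordSubspace d I)) +
        (Subtype.val ⁻¹' intLat d) := by
      rw [hxuniv]; trivial
    obtain ⟨w, ⟨k', hk', rfl⟩, z', hz', hsum⟩ := this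
    set y : Fin d → ℝ := μ' • (k' : Fin d → ℝ) + (z' : Fin d → ℝ) with hy
    have hqy : q y = q u := by
      erw [hy, map_add, map_smul,
        Submodule.linearProjOfIsCompl_apply_left hcompl k',
        Submodule.linearProjOfIsCompl_apply_left hcompl z']
      exact hsum
    have hyU : y ∈ (U : Set (Fin d → ℝ)) := by
      have hker : y - u ∈ U.direction := by
        have : q (y - u) = 0 := by rw [map_sub, hqy, sub_self]
        have hk := Submodule.linearProjOfIsCompl_ker hcompl
        rw [← hk]
        exact this
      have := AffineSubspace.vadd_mem_of_mem_direction hker hu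
      simpa [vsub_eq_sub, vadd_eq_add, sub_add_cancel] using this
    refine ⟨y, ⟨μ' • (k' : Fin d → ℝ), ?_, (z' : Fin d → ℝ), hz', rfl⟩, hyU⟩
    exact smul_set_mono_of_convex hconv h0K hμ'C.1 hμ'le ⟨(k' : Fin d → ℝ), hk', rfl⟩
  -- Conclusion
  apply le_antisymm
  · -- sInf A ≤ sSup B
    apply le_of_forall_pos_le_add
    intro δ hδ
    have hμA : sSup B + δ ∈ A := by
      apply hclaim
      · have : (0:ℝ) ≤ sSup B := le_trans (hC_nonneg I₀) (le_csSup hB_bdd ⟨I₀, hI₀card, rfl⟩)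
        linarith
      · intro I hcard
        have h1 : sInf (C I) ≤ sSup B := le_csSup hB_bdd ⟨I, hcard, rfl⟩
        have h2 : sInf (C I) < sSup B + δ := by linarith
        obtain ⟨μ', hμ'C, hlt⟩ := exists_lt_of_csInf_lt (hC_ne I) h2
        exact ⟨μ', hμ'C, hlt.le⟩
    exact csInf_le hA_bdd hμA
  · -- sSup B ≤ sInf A
    apply csSup_le hB_ne
    rintro x ⟨I, hcard, rfl⟩
    exact csInf_le_csInf (hC_bdd I) hA_ne (hAC I hcard)
end

section
/- Let T be a terminal d-polytope. If μ_s(T_n) = s/2 holds for every n ≤ d and every s ∈ {1,…,n}, then μ_i(T) = i/2 for all i ∈ {1,…,d}. -/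
open scoped Pointwise

/-- The standard terminal simplex `T_n = conv(-𝟙_n, e_1, …, e_n) ⊆ ℝ^n`. -/
def stdTerminal (n : ℕ) : Set (Fin n → ℝ) :=
  convexHull ℝ (insert (fun _ => (-1 : ℝ)) (Set.range fun j : Fin n => Pi.single j (1 : ℝ)))

/-- The translate by `u` of the standard terminal simplex supported on the coordinate
block `B`: `conv({u - 𝟙_B} ∪ {u + e_j : j ∈ B})`. -/
def blockTerminal {n : ℕ} (B : Finset (Fin n)) (u : Fin n → ℝ) : Set (Fin n → ℝ) :=
  convexHull ℝ (insert (u - ∑ j ∈ B, Pi.single j (1 : ℝ))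
    ((fun j => u + Pi.single j (1 : ℝ)) '' (B : Set (Fin n))))

/-- A terminal `n`-polytope: a direct sum, along a partition of the coordinates into
nonempty blocks, of (integral) translates of standard terminal simplices, each summand
containing the origin.  Since all summands are convex and contain `0`, the iterated
direct sum equals the convex hull of their union. -/
def IsTerminalPolytope {n : ℕ} (T : Set (Fin n → ℝ)) : Prop :=
  ∃ (k : ℕ) (B : Fin k → Finset (Fin n)) (u : Fin k → Fin n → ℤ),
    (∀ b, (B b).Nonempty) ∧
    (∀ j : Fin n, ∃ b, j ∈ B b) ∧
    (∀ b b', b ≠ b' → Disjoint (B b) (B b')) ∧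
    (∀ b, ∀ j, j ∉ B b → u b j = 0) ∧
    (∀ b, (0 : Fin n → ℝ) ∈ blockTerminal (B b) (fun j => (u b j : ℝ))) ∧
    T = convexHull ℝ (⋃ b, blockTerminal (B b) (fun j => (u b j : ℝ)))


open scoped Pointwise

variable {E : Type*} [AddCommGroup E] [Module ℝ E]

/-- scaling monotonicity for convex sets containing 0 -/
lemma aux_smul_subset {s : Set E} (hs : Convex ℝ s) (h0 : (0:E) ∈ s) {a b : ℝ}
    (ha : 0 ≤ a) (hab : a ≤ b) : a • s ⊆ b • s := by
  rcases eq_or_lt_of_le (ha.trans hab) with hb | hb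
  · have : a = 0 := le_antisymm (hab.trans hb.symm.le) ha
    subst this
    rw [← hb]
  · intro x hx
    rcases Set.mem_smul_set.1 hx with ⟨y, hy, rfl⟩
    rw [Set.mem_smul_set]
    refine ⟨(a/b) • y + (1 - a/b) • (0:E), hs hy h0 (by positivity)
      (by rw [sub_nonneg]; exact div_le_one_of_le₀ hab hb.le) (by ring), ?_⟩
    rw [smul_add, smul_smul, smul_zero, smul_zero, add_zero]
    congr 1
    field_simp

lemma aux_add_mem_smul {s : Set E} (hs : Convex ℝ s) {a b : ℝ} (ha : 0 ≤ a) (hb : 0 ≤ b)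
    {x y : E} (hx : x ∈ a • s) (hy : y ∈ b • s) : x + y ∈ (a + b) • s := by
  rcases Set.mem_smul_set.1 hx with ⟨p, hp, rfl⟩
  rcases Set.mem_smul_set.1 hy with ⟨q, hq, rfl⟩
  rcases eq_or_lt_of_le (add_nonneg ha hb) with hc | hc
  · have ha0 : a = 0 := by linarith
    have hb0 : b = 0 := by linarith
    subst ha0; subst hb0
    simpa using Set.mem_smul_set.2 ⟨p, hp, by simp⟩
  · rw [Set.mem_smul_set]
    refine ⟨(a/(a+b)) • p + (b/(a+b)) • q, hs hp hq (by positivity) (by positivity) ?_, ?_⟩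
    · field_simp
    · rw [smul_add, smul_smul, smul_smul, mul_div_cancel₀ _ hc.ne', mul_div_cancel₀ _ hc.ne']

lemma aux_sum_mem_smul {ι : Type*} {s : Set E} (hs : Convex ℝ s) (hne : s.Nonempty)
    (t : Finset ι) (c : ι → ℝ) (x : ι → E) (hc : ∀ i ∈ t, 0 ≤ c i) (hx : ∀ i ∈ t, x i ∈ s) :
    ∑ i ∈ t, c i • x i ∈ (∑ i ∈ t, c i) • s := by
  classical
  induction t using Finset.induction_on with
  | empty => simpa [Set.zero_smul_set hne] using rfl
  | @insert a tt hni ih =>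
    rw [Finset.sum_insert hni, Finset.sum_insert hni]
    exact aux_add_mem_smul hs (hc a (Finset.mem_insert_self a tt))
      (Finset.sum_nonneg fun i hi => hc i (Finset.mem_insert_of_mem hi))
      (Set.smul_mem_smul_set (hx a (Finset.mem_insert_self a tt)))
      (ih (fun i hi => hc i (Finset.mem_insert_of_mem hi))
        (fun i hi => hx i (Finset.mem_insert_of_mem hi)))

lemma aux_smul_smul_set {a b : ℝ} {s : Set E} : a • (b • s) = (a * b) • s := by
  ext x
  simp only [Set.mem_smul_set]
  constructor
  · rintro ⟨y, ⟨z, hz, rfl⟩, rfl⟩; exact ⟨z, hz, (smul_smul a b z).symm⟩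
  · rintro ⟨z, hz, rfl⟩; exact ⟨b • z, ⟨z, hz, rfl⟩, smul_smul a b z⟩
section Blocks
variable {d : ℕ}

/-- embedding of block coordinates -/
noncomputable def psiMap (B : Finset (Fin d)) : (Fin B.card → ℝ) →ₗ[ℝ] (Fin d → ℝ) where
  toFun v := fun j => if h : j ∈ B then v (B.equivFin ⟨j, h⟩) else 0
  map_add' x y := by funext j; by_cases h : j ∈ B <;> simp [h]
  map_smul' c x := by funext j; by_cases h : j ∈ B <;> simp [h]

/-- restriction to block coordinates -/
noncomputable def rhoMap (B : Finset (Fin d)) : (Fin d → ℝ) →ₗ[ℝ] (Fin B.card → ℝ) where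
  toFun x := fun t => x ((B.equivFin.symm t : {x // x ∈ B}) : Fin d)
  map_add' x y := rfl
  map_smul' c x := rfl

lemma psi_apply_mem {B : Finset (Fin d)} (v : Fin B.card → ℝ) {j : Fin d} (h : j ∈ B) :
    psiMap B v j = v (B.equivFin ⟨j, h⟩) := dif_pos h

lemma psi_apply_not_mem {B : Finset (Fin d)} (v : Fin B.card → ℝ) {j : Fin d} (h : j ∉ B) :
    psiMap B v j = 0 := dif_neg h

lemma rho_apply {B : Finset (Fin d)} (x : Fin d → ℝ) (t : Fin B.card) :
    rhoMap B x t = x ((B.equivFin.symm t : {x // x ∈ B}) : Fin d) := rfl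

lemma rho_psi {B : Finset (Fin d)} (v : Fin B.card → ℝ) : rhoMap B (psiMap B v) = v := by
  funext t
  rw [rho_apply, psi_apply_mem _ (B.equivFin.symm t).2]
  congr 1
  rw [Subtype.coe_eta, Equiv.apply_symm_apply]

lemma rho_apply_of_mem {B : Finset (Fin d)} (x : Fin d → ℝ) {j : Fin d} (h : j ∈ B) :
    rhoMap B x (B.equivFin ⟨j, h⟩) = x j := by
  rw [rho_apply, Equiv.symm_apply_apply]

lemma psi_rho_apply_mem {B : Finset (Fin d)} (x : Fin d → ℝ) {j : Fin d} (h : j ∈ B) :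
    psiMap B (rhoMap B x) j = x j := by
  rw [psi_apply_mem _ h, rho_apply_of_mem x h]

lemma rho_eq_zero_apply {B : Finset (Fin d)} {x : Fin d → ℝ} (hx : rhoMap B x = 0)
    {j : Fin d} (h : j ∈ B) : x j = 0 := by
  have := congrFun hx (B.equivFin ⟨j, h⟩)
  rwa [rho_apply_of_mem x h] at this

lemma rho_psi_disjoint {B B' : Finset (Fin d)} (hdis : Disjoint B B') (v : Fin B'.card → ℝ) :
    rhoMap B (psiMap B' v) = 0 := by
  funext t
  rw [rho_apply, psi_apply_not_mem]
  · rfl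
  · exact Finset.disjoint_left.1 hdis (B.equivFin.symm t).2

lemma psi_single {B : Finset (Fin d)} (t : Fin B.card) :
    psiMap B (Pi.single t (1:ℝ)) = Pi.single ((B.equivFin.symm t : {x // x ∈ B}) : Fin d) 1 := by
  funext j
  by_cases h : j ∈ B
  · rw [psi_apply_mem _ h, Pi.single_apply, Pi.single_apply]
    have : B.equivFin ⟨j, h⟩ = t ↔ j = ((B.equivFin.symm t : {x // x ∈ B}) : Fin d) := by
      constructor
      · intro hh
        simpa using congrArg (fun z => ((B.equivFin.symm z : {x // x ∈ B}) : Fin d)) hh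
      · intro hh
        rw [show (⟨j, h⟩ : {x // x ∈ B}) = B.equivFin.symm t from Subtype.ext hh,
          Equiv.apply_symm_apply]
    by_cases h2 : B.equivFin ⟨j, h⟩ = t
    · rw [if_pos h2, if_pos (this.1 h2)]
    · rw [if_neg h2, if_neg (fun hh => h2 (this.2 hh))]
  · rw [psi_apply_not_mem _ h, Pi.single_apply, if_neg]
    intro hh
    exact h (hh ▸ (B.equivFin.symm t).2)

lemma psi_neg_one {B : Finset (Fin d)} :
    psiMap B (fun _ => (-1:ℝ)) = -(∑ j ∈ B, Pi.single j (1:ℝ)) := by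
  funext j
  by_cases h : j ∈ B
  · rw [psi_apply_mem _ h]
    simp [Finset.sum_apply, Finset.sum_pi_single, h]
  · rw [psi_apply_not_mem _ h]
    simp [Finset.sum_apply, Finset.sum_pi_single, h]

lemma intLat_add {m : ℕ} {x y : Fin m → ℝ} (hx : x ∈ intLat m) (hy : y ∈ intLat m) :
    x + y ∈ intLat m := by
  intro j
  obtain ⟨a, ha⟩ := hx j
  obtain ⟨b, hb⟩ := hy j
  exact ⟨a + b, by simp [ha, hb]⟩

lemma intLat_zero {m : ℕ} : (0 : Fin m → ℝ) ∈ intLat m := fun j => ⟨0, by simp⟩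

lemma intLat_sum {m : ℕ} {ι : Type*} (t : Finset ι) (z : ι → (Fin m → ℝ))
    (hz : ∀ b ∈ t, z b ∈ intLat m) : ∑ b ∈ t, z b ∈ intLat m := by
  classical
  induction t using Finset.induction_on with
  | empty => simpa using intLat_zero
  | @insert a tt hni ih =>
    rw [Finset.sum_insert hni]
    exact intLat_add (hz a (Finset.mem_insert_self a tt))
      (ih fun b hb => hz b (Finset.mem_insert_of_mem hb))

lemma rho_intLat {B : Finset (Fin d)} {x : Fin d → ℝ} (hx : x ∈ intLat d) :
    rhoMap B x ∈ intLat B.card := fun t => hx _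

lemma psi_intLat {B : Finset (Fin d)} {v : Fin B.card → ℝ} (hv : v ∈ intLat B.card) :
    psiMap B v ∈ intLat d := by
  intro j
  by_cases h : j ∈ B
  · rw [psi_apply_mem _ h]; exact hv _
  · rw [psi_apply_not_mem _ h]; exact ⟨0, by simp⟩

/-- structure of blockTerminal as translated embedded standard terminal simplex -/
lemma blockTerminal_eq (B : Finset (Fin d)) (w : Fin d → ℝ) :
    blockTerminal B w = (fun v => w + psiMap B v) '' stdTerminal B.card := by
  have hf : ∃ f : (Fin B.card → ℝ) →ᵃ[ℝ] (Fin d → ℝ), ∀ v, f v = w + psiMap B v := by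
    refine ⟨AffineMap.comp (AffineEquiv.constVAdd ℝ (Fin d → ℝ) w).toAffineMap
      (psiMap B).toAffineMap, fun v => ?_⟩
    simp [AffineEquiv.constVAdd, vadd_eq_add]; rfl
  obtain ⟨f, hfv⟩ := hf
  have hfeq : (fun v => w + psiMap B v) = ⇑f := by funext v; rw [hfv]
  rw [hfeq, stdTerminal, AffineMap.image_convexHull, blockTerminal]
  congr 1
  rw [Set.image_insert_eq]
  congr 1
  · rw [hfv, psi_neg_one]; abel
  · rw [← Set.range_comp]
    ext x
    simp only [Set.mem_image, Set.mem_range, Function.comp_apply, hfv, psi_single,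
      Finset.mem_coe]
    constructor
    · rintro ⟨j, hj, rfl⟩
      exact ⟨B.equivFin ⟨j, hj⟩, by rw [Equiv.symm_apply_apply]⟩
    · rintro ⟨t, rfl⟩
      exact ⟨_, (B.equivFin.symm t).2, rfl⟩

lemma mem_blockTerminal_iff {B : Finset (Fin d)} {w x : Fin d → ℝ} :
    x ∈ blockTerminal B w ↔ ∃ v ∈ stdTerminal B.card, x = w + psiMap B v := by
  rw [blockTerminal_eq]
  constructor
  · rintro ⟨v, hv, rfl⟩; exact ⟨v, hv, rfl⟩
  · rintro ⟨v, hv, rfl⟩; exact ⟨v, hv, rfl⟩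

lemma blockTerminal_apply_not_mem {B : Finset (Fin d)} {w x : Fin d → ℝ}
    (hw : ∀ j ∉ B, w j = 0) (hx : x ∈ blockTerminal B w) {j : Fin d} (hj : j ∉ B) :
    x j = 0 := by
  obtain ⟨v, _, rfl⟩ := mem_blockTerminal_iff.1 hx
  simp [hw j hj, psi_apply_not_mem _ hj]

lemma neg_one_mem_stdTerminal (n : ℕ) : (fun _ => (-1:ℝ)) ∈ stdTerminal n :=
  subset_convexHull ℝ _ (Set.mem_insert _ _)

lemma convex_stdTerminal (n : ℕ) : Convex ℝ (stdTerminal n) := convex_convexHull ℝ _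

end Blocks
section Core

/-- partition identity -/
lemma sum_psi_rho {d k : ℕ} (B : Fin k → Finset (Fin d))
    (hcov : ∀ j : Fin d, ∃ b, j ∈ B b)
    (hdis : ∀ b b', b ≠ b' → Disjoint (B b) (B b')) (x : Fin d → ℝ) :
    ∑ b, psiMap (B b) (rhoMap (B b) x) = x := by
  funext j
  obtain ⟨b₀, hb₀⟩ := hcov j
  rw [Finset.sum_apply]
  rw [Finset.sum_eq_single b₀]
  · exact psi_rho_apply_mem x hb₀
  · intro b _ hb
    apply psi_apply_not_mem
    exact fun hj => (Finset.disjoint_left.1 (hdis b b₀ hb)) hj hb₀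
  · intro h; exact absurd (Finset.mem_univ b₀) h

/-- the defining set of covMin -/
def covSet {E : Type*} [AddCommGroup E] [Module ℝ E] (i : ℕ) (K L : Set E) : Set ℝ :=
  {μ : ℝ | 0 ≤ μ ∧ ∀ U : AffineSubspace ℝ E, (U : Set E).Nonempty →
    Module.finrank ℝ U.direction = Module.finrank ℝ E - i →
    ((μ • K + L) ∩ (U : Set E)).Nonempty}

lemma covMin_eq_sInf {E : Type*} [AddCommGroup E] [Module ℝ E] (i : ℕ) (K L : Set E) :
    covMin i K L = sInf (covSet i K L) := rfl

lemma covSet_bddBelow {E : Type*} [AddCommGroup E] [Module ℝ E] (i : ℕ) (K L : Set E) :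
    BddBelow (covSet i K L) := ⟨0, fun _ hx => hx.1⟩

lemma covSet_upward {E : Type*} [AddCommGroup E] [Module ℝ E] {i : ℕ} {K L : Set E}
    (hK : Convex ℝ K) (h0 : (0:E) ∈ K) {μ μ' : ℝ} (hμ : μ ∈ covSet i K L) (hle : μ ≤ μ') :
    μ' ∈ covSet i K L := by
  refine ⟨hμ.1.trans hle, fun U hU hrk => ?_⟩
  obtain ⟨p, ⟨q, hq, z, hz, rfl⟩, hp⟩ := hμ.2 U hU hrk
  exact ⟨q + z, ⟨q, aux_smul_subset hK h0 hμ.1 hle hq, z, hz, rfl⟩, hp⟩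

lemma exists_lt_of_covMin {E : Type*} [AddCommGroup E] [Module ℝ E] {i : ℕ} {K L : Set E}
    {v : ℝ} (h : covMin i K L = v) (hv : 0 < v) {ε : ℝ} (hε : 0 < ε) :
    ∃ μ ∈ covSet i K L, μ < v + ε := by
  have hne : (covSet i K L).Nonempty := by
    by_contra hcon
    rw [Set.not_nonempty_iff_eq_empty] at hcon
    rw [covMin_eq_sInf, hcon, Real.sInf_empty] at h
    linarith
  have := csInf_lt_iff (covSet_bddBelow i K L) hne (a := v + ε)
  rw [← covMin_eq_sInf, h] at this
  exact this.1 (by linarith)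

lemma not_mem_covSet {E : Type*} [AddCommGroup E] [Module ℝ E] {i : ℕ} {K L : Set E}
    {v : ℝ} (h : covMin i K L = v) {μ : ℝ} (hμ : μ < v) : μ ∉ covSet i K L := by
  intro hmem
  have := csInf_le (covSet_bddBelow i K L) hmem
  rw [← covMin_eq_sInf, h] at this
  linarith

/-- rank-nullity for a restricted map -/
lemma finrank_map_add_finrank_inf_ker {E F : Type*} [AddCommGroup E] [Module ℝ E]
    [AddCommGroup F] [Module ℝ F] [FiniteDimensional ℝ E]
    (W : Submodule ℝ E) (f : E →ₗ[ℝ] F) :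
    Module.finrank ℝ (W.map f) + Module.finrank ℝ ((W ⊓ LinearMap.ker f : Submodule ℝ E)) =
      Module.finrank ℝ W := by
  have h := LinearMap.finrank_range_add_finrank_ker (f.comp W.subtype)
  rw [LinearMap.range_comp, Submodule.range_subtype] at h
  have hle : W ⊓ LinearMap.ker f ≤ W := inf_le_left
  have e := Submodule.comapSubtypeEquivOfLe hle
  have e2 : LinearMap.ker (f.comp W.subtype) =
      Submodule.comap W.subtype (W ⊓ LinearMap.ker f) := by
    rw [LinearMap.ker_comp, Submodule.comap_inf, Submodule.comap_subtype_self, top_inf_eq]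
  have e3 : Module.finrank ℝ (LinearMap.ker (f.comp W.subtype)) =
      Module.finrank ℝ ((W ⊓ LinearMap.ker f : Submodule ℝ E)) := by
    rw [e2]; exact e.finrank_eq
  omega

/-- support bound on finrank -/
lemma finrank_le_of_support {d : ℕ} (A : Finset (Fin d)) (W : Submodule ℝ (Fin d → ℝ))
    (h : ∀ x ∈ W, ∀ j ∉ A, x j = 0) : Module.finrank ℝ W ≤ A.card := by
  classical
  set f : (Fin d → ℝ) →ₗ[ℝ] ({x // x ∈ A} → ℝ) :=
    LinearMap.funLeft ℝ ℝ (fun t : {x // x ∈ A} => (t : Fin d)) with hf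
  have hinj : Function.Injective (f.comp W.subtype) := by
    intro x y hxy
    apply Subtype.ext
    funext j
    by_cases hj : j ∈ A
    · exact congrFun hxy ⟨j, hj⟩
    · rw [h x x.2 j hj, h y y.2 j hj]
  have h1 := LinearMap.finrank_range_of_inj hinj
  have h2 : Module.finrank ℝ (LinearMap.range (f.comp W.subtype)) ≤
      Module.finrank ℝ ({x // x ∈ A} → ℝ) := Submodule.finrank_le _
  rw [Module.finrank_pi, Fintype.card_coe] at h2
  omega

/-- splitting a number below a sum -/
lemma exists_split {ι : Type*} [DecidableEq ι] (s : Finset ι) (n : ι → ℕ) :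
    ∀ i ≤ ∑ b ∈ s, n b, ∃ f : ι → ℕ, (∀ b, f b ≤ n b) ∧ (∀ b ∉ s, f b = 0) ∧
      ∑ b ∈ s, f b = i := by
  classical
  induction s using Finset.induction_on with
  | empty =>
    intro i hi
    simp only [Finset.sum_empty, Nat.le_zero] at hi
    exact ⟨fun _ => 0, fun b => Nat.zero_le _, fun _ _ => rfl, by simp [hi]⟩
  | @insert a tt hni ih =>
    intro i hi
    rw [Finset.sum_insert hni] at hi
    obtain ⟨f, hf1, hf2, hf3⟩ := ih (i - min (n a) i) (by omega)
    refine ⟨Function.update f a (min (n a) i), fun b => ?_, fun b hb => ?_, ?_⟩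
    · by_cases hba : b = a
      · subst hba; rw [Function.update_self]; omega
      · rw [Function.update_of_ne hba]; exact hf1 b
    · have hba : b ≠ a := fun hc => hb (hc ▸ Finset.mem_insert_self a tt)
      rw [Function.update_of_ne hba]
      exact hf2 b (fun hc => hb (Finset.mem_insert_of_mem hc))
    · rw [Finset.sum_insert hni, Function.update_self,
        Finset.sum_congr rfl (fun b hb => Function.update_of_ne
          (fun hc => hni (by rwa [hc] at hb)) _ f), hf3]
      omega

lemma filter_succ_eq {k m : ℕ} (hm : m < k) :
    Finset.univ.filter (fun b : Fin k => (b:ℕ) < m + 1) =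
      insert ⟨m, hm⟩ (Finset.univ.filter (fun b : Fin k => (b:ℕ) < m)) := by
  ext b
  simp only [Finset.mem_filter, Finset.mem_univ, true_and, Finset.mem_insert, Fin.ext_iff]
  omega

end Core
section Upper

lemma psi_rho_of_support {d : ℕ} {B : Finset (Fin d)} {x : Fin d → ℝ}
    (hx : ∀ j ∉ B, x j = 0) : psiMap B (rhoMap B x) = x := by
  funext j
  by_cases hj : j ∈ B
  · exact psi_rho_apply_mem x hj
  · rw [psi_apply_not_mem _ hj]; exact (hx j hj).symm

lemma upper_core {d k : ℕ} (B : Fin k → Finset (Fin d)) (u : Fin k → Fin d → ℤ)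
    (hdis : ∀ b b', b ≠ b' → Disjoint (B b) (B b'))
    (hu0 : ∀ b, ∀ j, j ∉ B b → u b j = 0)
    (hBne : ∀ b, (B b).Nonempty)
    (hcard : ∀ b, (B b).card ≤ d)
    (H : ∀ n : ℕ, 1 ≤ n → n ≤ d → ∀ s : ℕ, 1 ≤ s → s ≤ n →
      covMin s (stdTerminal n) (intLat n) = (s : ℝ) / 2) :
    ∀ m : ℕ, m ≤ k → ∀ j : ℕ, ∀ ε : ℝ, 0 < ε →
      ∀ U : AffineSubspace ℝ (Fin d → ℝ), (U : Set (Fin d → ℝ)).Nonempty →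
      (∀ x ∈ U.direction, ∀ jj : Fin d, (∀ b : Fin k, (b:ℕ) < m → jj ∉ B b) → x jj = 0) →
      (Module.finrank ℝ U.direction + j =
        ∑ b ∈ Finset.univ.filter (fun b : Fin k => (b:ℕ) < m), (B b).card) →
      ∃ p ∈ (U : Set (Fin d → ℝ)), ∃ c : Fin k → ℝ, ∃ t z : Fin k → (Fin d → ℝ),
        (∀ b, 0 ≤ c b) ∧
        (∑ b ∈ Finset.univ.filter (fun b : Fin k => (b:ℕ) < m), c b ≤ (j : ℝ)/2 + ε) ∧
        (∀ b : Fin k, (b:ℕ) < m →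
          t b ∈ blockTerminal (B b) (fun jj => (u b jj : ℝ)) ∧
          z b ∈ intLat d ∧
          psiMap (B b) (rhoMap (B b) p) = c b • t b + z b) := by
  intro m
  induction m with
  | zero =>
    intro _ j ε hε U hUne _ _
    obtain ⟨p, hp⟩ := hUne
    refine ⟨p, hp, 0, 0, 0, fun b => le_refl 0, ?_, fun b hb => absurd hb (Nat.not_lt_zero _)⟩
    simp only [Pi.zero_apply, Finset.sum_const, smul_zero]
    positivity
  | succ m ih =>
    intro hmk j ε hε U hUne hsupp hrank
    have hmk' : m ≤ k := Nat.le_of_succ_le hmk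
    have hmlt : m < k := hmk
    set bm : Fin k := ⟨m, hmlt⟩ with hbm
    set nm := (B bm).card with hnm
    set W := U.direction with hW
    set ρ := rhoMap (B bm) with hρ
    set r := Module.finrank ℝ (W.map ρ) with hr
    have hrle : r ≤ nm := by
      have h := Submodule.finrank_le (W.map ρ)
      rwa [Module.finrank_pi, Fintype.card_fin] at h
    obtain ⟨q₀, hq₀⟩ := hUne
    set uu : Fin d → ℝ := fun jj => (u bm jj : ℝ) with huu
    set u'' : Fin nm → ℝ := ρ uu with hu''
    have key : ∃ p₀ ∈ (U : Set (Fin d → ℝ)), ∃ cm : ℝ, ∃ t', t' ∈ stdTerminal nm ∧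
        ∃ z', z' ∈ intLat nm ∧
        0 ≤ cm ∧ cm ≤ ((nm - r : ℕ) : ℝ)/2 + ε/2 ∧ ρ p₀ = cm • (u'' + t') + z' := by
      rcases Nat.eq_or_lt_of_le hrle with heq | hlt
      · have hfr : Module.finrank ℝ (W.map ρ) =
            Module.finrank ℝ (Fin (B bm).card → ℝ) := by
          rw [Module.finrank_pi, Fintype.card_fin, ← hr]
          omega
        have htop : W.map ρ = ⊤ := Submodule.eq_top_of_finrank_eq hfr
        have hmem : -(ρ q₀) ∈ W.map ρ := by rw [htop]; trivial
        obtain ⟨w₀, hw₀, hw₀eq⟩ := hmem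
        refine ⟨w₀ +ᵥ q₀, AffineSubspace.vadd_mem_of_mem_direction hw₀ hq₀, 0,
          (fun _ => (-1:ℝ)), neg_one_mem_stdTerminal nm, 0, intLat_zero, le_refl 0,
          by positivity, ?_⟩
        have hadd : ρ (w₀ +ᵥ q₀) = ρ w₀ + ρ q₀ := by rw [vadd_eq_add]; exact map_add ρ w₀ q₀
        rw [hadd, hw₀eq]
        simp
      · have h1nm : 1 ≤ nm := Finset.card_pos.2 (hBne bm)
        have him1 : 1 ≤ nm - r := by omega
        have hcov := H nm h1nm (hcard bm) (nm - r) him1 (by omega)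
        have hpos : (0:ℝ) < ((nm - r : ℕ) : ℝ)/2 := by
          have : (1:ℝ) ≤ ((nm - r : ℕ) : ℝ) := by exact_mod_cast him1
          linarith
        obtain ⟨μ', hμ'S, hμ'lt⟩ := exists_lt_of_covMin hcov hpos (half_pos hε)
        set Q : AffineSubspace ℝ (Fin nm → ℝ) :=
          AffineSubspace.mk' (ρ q₀ - μ' • u'') (W.map ρ) with hQ
        have hQne : (Q : Set (Fin nm → ℝ)).Nonempty := ⟨_, AffineSubspace.self_mem_mk' _ _⟩
        have hQrk : Module.finrank ℝ Q.direction =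
            Module.finrank ℝ (Fin nm → ℝ) - (nm - r) := by
          rw [hQ, AffineSubspace.direction_mk', Module.finrank_pi, Fintype.card_fin, ← hr]
          omega
        obtain ⟨y, ⟨a, ha, zz, hzz, rfl⟩, hyQ⟩ := hμ'S.2 Q hQne hQrk
        rw [AffineSubspace.mem_coe] at hyQ
        rcases Set.mem_smul_set.1 ha with ⟨t', ht', rfl⟩
        rw [hQ, AffineSubspace.mem_mk'] at hyQ
        obtain ⟨w₀, hw₀, hw₀eq⟩ := hyQ
        refine ⟨w₀ +ᵥ q₀, AffineSubspace.vadd_mem_of_mem_direction hw₀ hq₀, μ', t', ht',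
          zz, hzz, hμ'S.1, le_of_lt hμ'lt, ?_⟩
        have hadd : ρ (w₀ +ᵥ q₀) = ρ w₀ + ρ q₀ := by rw [vadd_eq_add]; exact map_add ρ w₀ q₀
        rw [hadd, hw₀eq, vsub_eq_sub, smul_add]
        beta_reduce
        abel
    obtain ⟨p₀, hp₀U, cm, t', ht', z', hz', hcm0, hcmle, hρp₀⟩ := key
    set D' := W ⊓ LinearMap.ker ρ with hD'
    set U' : AffineSubspace ℝ (Fin d → ℝ) := AffineSubspace.mk' p₀ D' with hU'
    have hU'ne : (U' : Set (Fin d → ℝ)).Nonempty := ⟨p₀, AffineSubspace.self_mem_mk' _ _⟩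
    have hU'dir : U'.direction = D' := AffineSubspace.direction_mk' _ _
    have hsupp' : ∀ x ∈ U'.direction, ∀ jj : Fin d,
        (∀ b : Fin k, (b:ℕ) < m → jj ∉ B b) → x jj = 0 := by
      intro x hx jj hjj
      rw [hU'dir] at hx
      by_cases hjm : jj ∈ B bm
      · exact rho_eq_zero_apply (LinearMap.mem_ker.1 hx.2) hjm
      · refine hsupp x hx.1 jj ?_
        intro b hb
        rcases Nat.lt_succ_iff_lt_or_eq.1 hb with h' | h'
        · exact hjj b h'
        · rw [show b = bm from Fin.ext h']
          exact hjm
    set Nm := ∑ b ∈ Finset.univ.filter (fun b : Fin k => (b:ℕ) < m), (B b).card with hNm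
    have hbmnot : bm ∉ Finset.univ.filter (fun b : Fin k => (b:ℕ) < m) := by
      simp [Finset.mem_filter, hbm]
    have hsumsucc : ∑ b ∈ Finset.univ.filter (fun b : Fin k => (b:ℕ) < m + 1), (B b).card
        = nm + Nm := by
      rw [filter_succ_eq hmlt, Finset.sum_insert hbmnot]
    have hrn : r + Module.finrank ℝ D' = Module.finrank ℝ W :=
      finrank_map_add_finrank_inf_ker W ρ
    have hD'le : Module.finrank ℝ D' ≤ Nm := by
      have hcA : ((Finset.univ.filter (fun b : Fin k => (b:ℕ) < m)).biUnion B).card = Nm := by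
        rw [hNm]
        exact Finset.card_biUnion (fun b _ b' _ hne => hdis b b' hne)
      rw [← hcA]
      apply finrank_le_of_support
      intro x hx jj hjj
      refine hsupp' x (by rw [hU'dir]; exact hx) jj ?_
      intro b hb hbmem
      exact hjj (Finset.mem_biUnion.2 ⟨b, by simp [hb], hbmem⟩)
    set j' := Nm - Module.finrank ℝ D' with hj'
    have hrank' : Module.finrank ℝ U'.direction + j' = Nm := by
      rw [hU'dir]; omega
    have hjsplit : (nm - r) + j' = j := by
      rw [hsumsucc] at hrank
      omega
    obtain ⟨p, hpU', c, t, z, hc0, hcsum, hprops⟩ :=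
      ih hmk' j' (ε/2) (half_pos hε) U' hU'ne hsupp' hrank'
    have hpdiff := AffineSubspace.mem_mk'.1 hpU'
    have hpU : p ∈ (U : Set (Fin d → ℝ)) := by
      have h2 : p = (p -ᵥ p₀) +ᵥ p₀ := (vsub_vadd p p₀).symm
      rw [h2]
      exact AffineSubspace.vadd_mem_of_mem_direction hpdiff.1 hp₀U
    have hρp : ρ p = ρ p₀ := by
      have h3 : ρ (p - p₀) = 0 := hpdiff.2
      rw [map_sub, sub_eq_zero] at h3
      exact h3
    set tb : Fin d → ℝ := uu + psiMap (B bm) t' with htbdef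
    set zb : Fin d → ℝ := psiMap (B bm) z' with hzbdef
    have htb : tb ∈ blockTerminal (B bm) uu := mem_blockTerminal_iff.2 ⟨t', ht', rfl⟩
    have hzb : zb ∈ intLat d := psi_intLat hz'
    have hψuu : psiMap (B bm) u'' = uu :=
      psi_rho_of_support (fun jj hj => by simp [huu, hu0 bm jj hj])
    have hψm : psiMap (B bm) (ρ p) = cm • tb + zb := by
      rw [hρp, hρp₀, map_add, map_smul, map_add, hψuu, htbdef, hzbdef]
    refine ⟨p, hpU, Function.update c bm cm, Function.update t bm tb,
      Function.update z bm zb, ?_, ?_, ?_⟩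
    · intro b
      by_cases hbbm : b = bm
      · rw [hbbm, Function.update_self]; exact hcm0
      · rw [Function.update_of_ne hbbm]; exact hc0 b
    · rw [filter_succ_eq hmlt, Finset.sum_insert hbmnot, Function.update_self,
        Finset.sum_congr rfl (fun b hb => Function.update_of_ne
          (fun hc => hbmnot (by rwa [hc] at hb)) _ c)]
      have hcast : (j : ℝ) = ((nm - r : ℕ) : ℝ) + (j' : ℝ) := by
        rw [← hjsplit]; push_cast; ring
      rw [hcast]
      linarith
    · intro b hb
      by_cases hbbm : b = bm
      · subst hbbm
        rw [Function.update_self, Function.update_self, Function.update_self]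
        exact ⟨htb, hzb, hψm⟩
      · have hblt : (b:ℕ) < m := by
          rcases Nat.lt_succ_iff_lt_or_eq.1 hb with h' | h'
          · exact h'
          · exact absurd (Fin.ext h') hbbm
        rw [Function.update_of_ne hbbm, Function.update_of_ne hbbm,
          Function.update_of_ne hbbm]
        exact hprops b hblt

end Upper
section Lower

set_option maxHeartbeats 2000000 in
lemma lower_core {d k : ℕ} (B : Fin k → Finset (Fin d)) (u : Fin k → Fin d → ℤ)
    (hcov : ∀ j : Fin d, ∃ b, j ∈ B b)
    (hdis : ∀ b b', b ≠ b' → Disjoint (B b) (B b'))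
    (hu0 : ∀ b, ∀ j, j ∉ B b → u b j = 0)
    (h0 : ∀ b, (0 : Fin d → ℝ) ∈ blockTerminal (B b) (fun j => (u b j : ℝ)))
    (hcard : ∀ b, (B b).card ≤ d)
    (hsumcard : ∑ b, (B b).card = d)
    (H : ∀ n : ℕ, 1 ≤ n → n ≤ d → ∀ s : ℕ, 1 ≤ s → s ≤ n →
      covMin s (stdTerminal n) (intLat n) = (s : ℝ) / 2)
    (i : ℕ) (hi1 : 1 ≤ i) (hid : i ≤ d) :
    ∀ μ ∈ covSet i (convexHull ℝ (⋃ b, blockTerminal (B b) (fun j => (u b j : ℝ))))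
      (intLat d), (i : ℝ)/2 ≤ μ := by
  classical
  intro μ hμ
  by_contra hcon
  push_neg at hcon
  have hμ0 : 0 ≤ μ := hμ.1
  have hk : 0 < k := by
    obtain ⟨b, _⟩ := hcov ⟨0, by omega⟩
    exact b.pos
  -- split i among the blocks
  obtain ⟨is, his, -, hsumis⟩ := exists_split Finset.univ (fun b : Fin k => (B b).card) i
    (by rw [hsumcard]; exact hid)
  set A : Finset (Fin k) := Finset.univ.filter (fun b => 1 ≤ is b) with hA
  have hsumA : ∑ b ∈ A, is b = i := by
    rw [hA, Finset.sum_filter_of_ne (fun b _ hb => by omega)]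
    exact hsumis
  set δ : ℝ := min (1/2 : ℝ) (((i:ℝ)/2 - μ)/(2*k)) with hδ
  have hkR : (0:ℝ) < (k:ℝ) := by exact_mod_cast hk
  have hδpos : 0 < δ := by
    apply lt_min (by norm_num)
    apply div_pos (by linarith) (by linarith)
  have hδhalf : δ ≤ 1/2 := min_le_left _ _
  have hδk : (k:ℝ) * δ ≤ ((i:ℝ)/2 - μ)/2 := by
    have h1 : δ ≤ ((i:ℝ)/2 - μ)/(2*k) := min_le_right _ _
    have h2 : (k:ℝ) * δ ≤ (k:ℝ) * (((i:ℝ)/2 - μ)/(2*k)) :=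
      mul_le_mul_of_nonneg_left h1 (le_of_lt hkR)
    have h3 : (k:ℝ) * (((i:ℝ)/2 - μ)/(2*k)) = ((i:ℝ)/2 - μ)/2 := by
      field_simp
    linarith
  set μb : Fin k → ℝ := fun b => (is b : ℝ)/2 - δ with hμb
  -- per-block avoided planes
  have hplanes : ∀ b : Fin k, ∃ V : AffineSubspace ℝ (Fin (B b).card → ℝ),
      (V : Set (Fin (B b).card → ℝ)).Nonempty ∧
      Module.finrank ℝ V.direction = (B b).card - is b ∧
      (b ∈ A → ∀ x ∈ (μb b) • stdTerminal (B b).card + intLat (B b).card,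
        x ∉ (V : Set (Fin (B b).card → ℝ))) := by
    intro b
    by_cases hbA : b ∈ A
    · have h1 : 1 ≤ is b := (Finset.mem_filter.1 hbA).2
      have h1R : (1:ℝ) ≤ (is b : ℝ) := by exact_mod_cast h1
      have hH := H (B b).card (le_trans h1 (his b)) (hcard b) (is b) h1 (his b)
      have hμb0 : 0 ≤ μb b := by rw [hμb]; simp only; linarith
      have hnot : μb b ∉ covSet (is b) (stdTerminal (B b).card) (intLat (B b).card) :=
        not_mem_covSet hH (by rw [hμb]; simp only; linarith)
      rw [covSet, Set.mem_setOf_eq] at hnot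
      push_neg at hnot
      obtain ⟨V, hVne, hVrk, hVdis⟩ := hnot hμb0
      refine ⟨V, hVne, ?_, fun _ x hx hxV => ?_⟩
      · rw [Module.finrank_pi, Fintype.card_fin] at hVrk
        exact hVrk
      · exact Set.eq_empty_iff_forall_notMem.1 hVdis x ⟨hx, hxV⟩
    · have his0 : is b = 0 := by
        by_contra hne
        exact hbA (Finset.mem_filter.2 ⟨Finset.mem_univ b, by omega⟩)
      refine ⟨⊤, ⟨0, trivial⟩, ?_, fun hbA' => absurd hbA' hbA⟩
      rw [AffineSubspace.direction_top, finrank_top, Module.finrank_pi, Fintype.card_fin,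
        his0]
      omega
  choose V hVne hVrk hVdis using hplanes
  choose q2 hq2 using hVne
  -- assemble the big avoided plane
  set u''f : ∀ b : Fin k, Fin (B b).card → ℝ :=
    fun b => rhoMap (B b) (fun jj => (u b jj : ℝ)) with hu''f
  set SB : ∀ b : Fin k, Set (Fin (B b).card → ℝ) :=
    fun b => (fun w => u''f b + w) '' stdTerminal (B b).card with hSB
  have hconvSB : ∀ b, Convex ℝ (SB b) := fun b => (convex_stdTerminal _).translate _
  have hSBne : ∀ b, (SB b).Nonempty :=
    fun b => ⟨_, ⟨_, neg_one_mem_stdTerminal _, rfl⟩⟩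
  have hSB0 : ∀ b, (0 : Fin (B b).card → ℝ) ∈ SB b := by
    intro b
    obtain ⟨v, hv, hveq⟩ := mem_blockTerminal_iff.1 (h0 b)
    refine ⟨v, hv, ?_⟩
    have h6 := congrArg (rhoMap (B b)) hveq
    rw [map_zero, map_add, rho_psi] at h6
    exact h6.symm
  set q0 : ∀ b : Fin k, Fin (B b).card → ℝ := fun b => q2 b + (μb b) • u''f b with hq0
  set x₀ : Fin d → ℝ := ∑ b, psiMap (B b) (q0 b) with hx₀
  set ι : (∀ b : Fin k, ↥((V b).direction)) →ₗ[ℝ] (Fin d → ℝ) :=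
    { toFun := fun y => ∑ b, psiMap (B b) ((y b : Fin (B b).card → ℝ)),
      map_add' := fun x y => by
        simp only [Pi.add_apply, Submodule.coe_add, map_add, Finset.sum_add_distrib]
      map_smul' := fun cc x => by
        simp only [Pi.smul_apply, Submodule.coe_smul, map_smul, RingHom.id_apply,
          Finset.smul_sum] } with hι
  have hρsum : ∀ (g : ∀ b : Fin k, Fin (B b).card → ℝ) (b : Fin k),
      rhoMap (B b) (∑ b', psiMap (B b') (g b')) = g b := by
    intro g b
    rw [map_sum, Finset.sum_eq_single b]
    · rw [rho_psi]
    · intro b' _ hb'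
      exact rho_psi_disjoint (hdis b b' (Ne.symm hb')) _
    · intro hh
      exact absurd (Finset.mem_univ b) hh
  have hρι : ∀ y (b : Fin k), rhoMap (B b) (ι y) = (y b : Fin (B b).card → ℝ) :=
    fun y b => hρsum (fun b' => (y b' : Fin (B b').card → ℝ)) b
  have hinj : Function.Injective ι := by
    intro x y hxy
    funext b
    apply Subtype.ext
    rw [← hρι x b, ← hρι y b, hxy]
  have hrkDD : Module.finrank ℝ (LinearMap.range ι) = d - i := by
    rw [LinearMap.finrank_range_of_inj hinj, Module.finrank_pi_fintype,
      Finset.sum_congr rfl (fun b _ => hVrk b)]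
    have h1 : ∑ b, ((B b).card - is b) + ∑ b, is b = ∑ b, (B b).card := by
      rw [← Finset.sum_add_distrib]
      exact Finset.sum_congr rfl fun b _ => by
        have := his b
        omega
    omega
  set QQ : AffineSubspace ℝ (Fin d → ℝ) := AffineSubspace.mk' x₀ (LinearMap.range ι)
    with hQQ
  have hQQrk : Module.finrank ℝ QQ.direction = Module.finrank ℝ (Fin d → ℝ) - i := by
    rw [hQQ, AffineSubspace.direction_mk', hrkDD, Module.finrank_pi, Fintype.card_fin]
  obtain ⟨pt, ⟨y, hy, zz, hzz, rfl⟩, hptQ⟩ :=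
    hμ.2 QQ ⟨x₀, AffineSubspace.self_mem_mk' _ _⟩ hQQrk
  -- decompose y
  have hdecomp : ∃ c : Fin k → ℝ, (∀ b, 0 ≤ c b) ∧ (∑ b, c b ≤ μ) ∧
      ∀ b, rhoMap (B b) y ∈ (c b) • SB b := by
    rcases Set.mem_smul_set.1 hy with ⟨x, hxT, rfl⟩
    set R₁ : Set (Fin d → ℝ) := {x | ∃ c : Fin k → ℝ, (∀ b, 0 ≤ c b) ∧ (∑ b, c b ≤ 1) ∧
      ∀ b, rhoMap (B b) x ∈ (c b) • SB b} with hR₁def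
    have hR₁ : Convex ℝ R₁ := by
      rintro p ⟨c, hc0, hc1, hcmem⟩ p' ⟨c', hc0', hc1', hcmem'⟩ a bb ha hb hab
      refine ⟨fun b => a * c b + bb * c' b,
        fun b => by have := hc0 b; have := hc0' b; positivity, ?_, fun b => ?_⟩
      · rw [Finset.sum_add_distrib, ← Finset.mul_sum, ← Finset.mul_sum]
        nlinarith
      · rw [map_add, map_smul, map_smul]
        have h1 : a • rhoMap (B b) p ∈ (a * c b) • SB b := by
          rw [← aux_smul_smul_set]
          exact Set.smul_mem_smul_set (hcmem b)
        have h2 : bb • rhoMap (B b) p' ∈ (bb * c' b) • SB b := by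
          rw [← aux_smul_smul_set]
          exact Set.smul_mem_smul_set (hcmem' b)
        exact aux_add_mem_smul (hconvSB b) (by have := hc0 b; positivity)
          (by have := hc0' b; positivity) h1 h2
    have hsub : convexHull ℝ (⋃ b, blockTerminal (B b) (fun j => (u b j : ℝ))) ⊆ R₁ := by
      apply convexHull_min _ hR₁
      rintro x hx
      rw [Set.mem_iUnion] at hx
      obtain ⟨b₀, hxb⟩ := hx
      refine ⟨fun b => if b = b₀ then 1 else 0,
        fun b => by by_cases hbb : b = b₀ <;> simp [hbb], by simp, fun b => ?_⟩
      by_cases hbb : b = b₀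
      · subst hbb
        beta_reduce
        rw [if_pos rfl]
        obtain ⟨v, hv, rfl⟩ := mem_blockTerminal_iff.1 hxb
        rw [map_add, rho_psi]
        exact Set.mem_smul_set.2 ⟨u''f b + v, ⟨v, hv, rfl⟩, one_smul _ _⟩
      · beta_reduce
        rw [if_neg hbb]
        have hzero : rhoMap (B b) x = 0 := by
          funext tt
          rw [rho_apply]
          refine blockTerminal_apply_not_mem (fun jj hj => by simp [hu0 b₀ jj hj]) hxb ?_
          exact fun hmem => (Finset.disjoint_left.1 (hdis b b₀ hbb))
            (by exact Finset.coe_mem _) hmem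
        rw [hzero, Set.zero_smul_set (hSBne b)]
        simp
    obtain ⟨c, hc0, hc1, hcm⟩ := hsub hxT
    refine ⟨fun b => μ * c b, fun b => mul_nonneg hμ0 (hc0 b), ?_, fun b => ?_⟩
    · rw [← Finset.mul_sum]
      nlinarith
    · rw [map_smul, ← aux_smul_smul_set]
      exact Set.smul_mem_smul_set (hcm b)
  obtain ⟨c, hc0, hcsum, hcm⟩ := hdecomp
  -- find a violated block
  have hex : ∃ b ∈ A, c b < μb b := by
    by_contra hcon2
    push_neg at hcon2
    have h1 : ∑ b ∈ A, μb b ≤ ∑ b ∈ A, c b := Finset.sum_le_sum hcon2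
    have h2 : ∑ b ∈ A, c b ≤ ∑ b, c b :=
      Finset.sum_le_sum_of_subset_of_nonneg (Finset.filter_subset _ _)
        (fun b _ _ => hc0 b)
    have h3 : ∑ b ∈ A, μb b = (i:ℝ)/2 - (A.card : ℝ) * δ := by
      rw [hμb]
      rw [Finset.sum_sub_distrib, Finset.sum_const, ← Finset.sum_div]
      have h4 : ∑ b ∈ A, (is b : ℝ) = (i : ℝ) := by
        rw [← hsumA]
        push_cast
        rfl
      rw [h4, nsmul_eq_mul]
    have h5 : (A.card : ℝ) ≤ (k : ℝ) := by
      have := Finset.card_filter_le Finset.univ (fun b : Fin k => 1 ≤ is b)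
      have h6 : A.card ≤ k := by simpa [hA] using this
      exact_mod_cast h6
    have h7 : (A.card : ℝ) * δ ≤ (k:ℝ) * δ := mul_le_mul_of_nonneg_right h5 hδpos.le
    linarith
  obtain ⟨b, hbA, hcb⟩ := hex
  -- contradiction at block b
  have hmono : (c b) • SB b ⊆ (μb b) • SB b :=
    aux_smul_subset (hconvSB b) (hSB0 b) (hc0 b) hcb.le
  have hx2 : rhoMap (B b) (y + zz) - (μb b) • u''f b ∈
      (μb b) • stdTerminal (B b).card + intLat (B b).card := by
    have hρy : rhoMap (B b) y ∈ (μb b) • SB b := hmono (hcm b)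
    obtain ⟨w2, hw2, hw2eq⟩ := Set.mem_smul_set.1 hρy
    obtain ⟨v2, hv2, rfl⟩ := hw2
    refine ⟨(μb b) • v2, Set.smul_mem_smul_set hv2, rhoMap (B b) zz, rho_intLat hzz, ?_⟩
    rw [map_add, ← hw2eq, smul_add]
    abel
  have hptQ' := AffineSubspace.mem_mk'.1
    (by rwa [AffineSubspace.mem_coe] at hptQ)
  obtain ⟨ys, hyseq⟩ := hptQ'
  have hρx₀ : rhoMap (B b) x₀ = q0 b := hρsum q0 b
  have hρdiff : rhoMap (B b) (y + zz) - q0 b = (ys b : Fin (B b).card → ℝ) := by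
    have h9 := congrArg (rhoMap (B b)) hyseq
    rw [hρι] at h9
    beta_reduce at h9
    rw [vsub_eq_sub, map_sub, hρx₀] at h9
    exact h9.symm
  have hmemV : rhoMap (B b) (y + zz) - (μb b) • u''f b ∈ (V b : Set (Fin (B b).card → ℝ)) := by
    have h8 : rhoMap (B b) (y + zz) - (μb b) • u''f b =
        (ys b : Fin (B b).card → ℝ) +ᵥ q2 b := by
      rw [vadd_eq_add, ← hρdiff, hq0]
      beta_reduce
      abel
    rw [h8]
    exact AffineSubspace.vadd_mem_of_mem_direction (ys b).2 (hq2 b)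
  exact hVdis b hbA _ hx2 hmemV

end Lower
/-- **Corollary.** If `μ_s(T_n) = s/2` for every `n ≤ d` and `s ∈ {1,…,n}`, then every
terminal `d`-polytope `T` satisfies `μ_i(T) = i/2` for all `i ∈ {1,…,d}`. -/
theorem covMin_terminalPolytope
    (d : ℕ) (T : Set (Fin d → ℝ)) (hT : IsTerminalPolytope T)
    (H : ∀ n : ℕ, 1 ≤ n → n ≤ d → ∀ s : ℕ, 1 ≤ s → s ≤ n →
      covMin s (stdTerminal n) (intLat n) = (s : ℝ) / 2) :
    ∀ i : ℕ, 1 ≤ i → i ≤ d → covMin i T (intLat d) = (i : ℝ) / 2 := by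
  obtain ⟨k, B, u, hBne, hcov, hdis, hu0, h0, hTeq⟩ := hT
  subst hTeq
  intro i hi1 hid
  have hd1 : 1 ≤ d := le_trans hi1 hid
  have hcard : ∀ b, (B b).card ≤ d := fun b => by
    have h := Finset.card_le_univ (B b)
    simpa using h
  have hsumcard : ∑ b, (B b).card = d := by
    have h1 : Finset.univ.biUnion B = (Finset.univ : Finset (Fin d)) := by
      ext j
      simp only [Finset.mem_biUnion, Finset.mem_univ, true_and, iff_true]
      exact hcov j
    have h2 := Finset.card_biUnion (s := Finset.univ) (t := B)
      (fun b _ b' _ hne => hdis b b' hne)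
    rw [h1, Finset.card_fin] at h2
    exact h2.symm
  obtain ⟨b₀, -⟩ := hcov ⟨0, by omega⟩
  have hTconv : Convex ℝ (convexHull ℝ (⋃ b, blockTerminal (B b) (fun j => (u b j : ℝ)))) :=
    convex_convexHull ℝ _
  have hT0 : (0 : Fin d → ℝ) ∈ convexHull ℝ (⋃ b, blockTerminal (B b)
      (fun j => (u b j : ℝ))) :=
    subset_convexHull ℝ _ (Set.mem_iUnion.2 ⟨b₀, h0 b₀⟩)
  have hupper : ∀ ε : ℝ, 0 < ε → ((i:ℝ)/2 + ε) ∈ covSet i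
      (convexHull ℝ (⋃ b, blockTerminal (B b) (fun j => (u b j : ℝ)))) (intLat d) := by
    intro ε hε
    refine ⟨by positivity, ?_⟩
    intro U hUne hUrk
    have hfilter : Finset.univ.filter (fun b : Fin k => (b:ℕ) < k) =
        (Finset.univ : Finset (Fin k)) := by
      ext b
      simp [b.isLt]
    rw [Module.finrank_pi, Fintype.card_fin] at hUrk
    have hrk2 : Module.finrank ℝ U.direction + i =
        ∑ b ∈ Finset.univ.filter (fun b : Fin k => (b:ℕ) < k), (B b).card := by
      rw [hfilter, hsumcard]
      omega
    obtain ⟨p, hpU, c, t, z, hc0, hcsum, hprops⟩ :=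
      upper_core B u hdis hu0 hBne hcard H k le_rfl i ε hε U hUne
        (fun x hx jj hjj => by
          obtain ⟨b, hb⟩ := hcov jj
          exact absurd hb (hjj b b.isLt)) hrk2
    rw [hfilter] at hcsum
    have hpeq : p = ∑ b, psiMap (B b) (rhoMap (B b) p) := (sum_psi_rho B hcov hdis p).symm
    refine ⟨p, ⟨∑ b, c b • t b, ?_, ∑ b, z b,
      intLat_sum _ _ (fun b _ => (hprops b b.isLt).2.1), ?_⟩, hpU⟩
    · have h1 : ∑ b, c b • t b ∈ (∑ b, c b) •
          convexHull ℝ (⋃ b, blockTerminal (B b) (fun j => (u b j : ℝ))) :=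
        aux_sum_mem_smul hTconv ⟨0, hT0⟩ _ _ _ (fun b _ => hc0 b)
          (fun b _ => subset_convexHull ℝ _ (Set.mem_iUnion.2 ⟨b, (hprops b b.isLt).1⟩))
      exact aux_smul_subset hTconv hT0 (Finset.sum_nonneg (fun b _ => hc0 b)) hcsum h1
    · show (∑ b, c b • t b) + (∑ b, z b) = p
      rw [hpeq, ← Finset.sum_add_distrib]
      exact Finset.sum_congr rfl fun b _ => ((hprops b b.isLt).2.2).symm
  have hSne : (covSet i (convexHull ℝ (⋃ b, blockTerminal (B b) (fun j => (u b j : ℝ))))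
      (intLat d)).Nonempty := ⟨(i:ℝ)/2 + 1, hupper 1 one_pos⟩
  have hlow := lower_core B u hcov hdis hu0 h0 hcard hsumcard H i hi1 hid
  rw [covMin_eq_sInf]
  apply le_antisymm
  · apply le_of_forall_pos_le_add
    intro ε hε
    exact csInf_le (covSet_bddBelow _ _ _) (hupper ε hε)
  · exact le_csInf hSne hlow
end

section
/- For every d ∈ ℕ and every i ∈ {1,…,d}, the i-th covering minimum of the standard crosspolytope conv(±e_1, …, ±e_d) ⊆ ℝ^d with respect to ℤ^d equals i/2. -/
open scoped Pointwise

/-- Membership in the crosspolytope from an ℓ¹ bound. -/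
lemma mem_cross_of_l1 {d : ℕ} (hd : 0 < d) (x : Fin d → ℝ) (hx : ∑ j, |x j| ≤ 1) :
    x ∈ convexHull ℝ ((Set.range fun j : Fin d => Pi.single j (1 : ℝ)) ∪
      (Set.range fun j : Fin d => Pi.single j (-1 : ℝ))) := by
  classical
  set j0 : Fin d := ⟨0, hd⟩
  set s : ℝ := ∑ j, |x j| with hs
  set c : Fin d → ℝ := fun j => if j = j0 then (1 - s) / 2 else 0 with hc
  have hc0 : ∀ j, 0 ≤ c j := by
    intro j
    simp only [hc]
    split
    · linarith
    · exact le_rfl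
  set w : Fin d × Bool → ℝ := fun p =>
    (if p.2 then max (x p.1) 0 else max (-x p.1) 0) + c p.1 with hw
  set z : Fin d × Bool → (Fin d → ℝ) := fun p =>
    Pi.single p.1 (if p.2 then (1 : ℝ) else -1) with hz
  have hw0 : ∀ p ∈ Finset.univ, 0 ≤ w p := by
    intro p _
    have h2 := hc0 p.1
    have h1 : (0:ℝ) ≤ if p.2 then max (x p.1) 0 else max (-x p.1) 0 := by
      split <;> exact le_max_right _ _
    simpa [hw] using add_nonneg h1 h2
  have hcsum : ∑ j, c j = (1 - s) / 2 := by
    simp [hc, Finset.sum_ite_eq']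
  have hws : ∑ p, w p = 1 := by
    rw [Fintype.sum_prod_type]
    have key : ∀ j : Fin d, (∑ b : Bool, w (j, b)) = |x j| + 2 * c j := by
      intro j
      rw [Fintype.sum_bool]
      have h := max_zero_add_max_neg_zero_eq_abs_self (x j)
      have e1 : w (j, true) = max (x j) 0 + c j := by simp [hw]
      have e2 : w (j, false) = max (-x j) 0 + c j := by simp [hw]
      rw [e1, e2]
      linarith
    calc ∑ j : Fin d, ∑ b : Bool, w (j, b)
        = ∑ j, (|x j| + 2 * c j) := Finset.sum_congr rfl fun j _ => key j
      _ = s + 2 * ((1 - s) / 2) := by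
          rw [Finset.sum_add_distrib, ← Finset.mul_sum, hcsum, hs]
      _ = 1 := by ring
  have hkey : ∀ j : Fin d, (∑ b : Bool, w (j, b) • z (j, b)) = Pi.single j (x j) := by
    intro j
    rw [Fintype.sum_bool]
    have hzf : z (j, false) = -z (j, true) := by
      simp [hz, Pi.single_neg]
    rw [hzf, smul_neg, ← sub_eq_add_neg, ← sub_smul]
    have hws' : w (j, true) - w (j, false) = x j := by
      have h := max_zero_sub_eq_self (x j)
      have e1 : w (j, true) = max (x j) 0 + c j := by simp [hw]
      have e2 : w (j, false) = max (-x j) 0 + c j := by simp [hw]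
      rw [e1, e2]
      linarith
    rw [hws']
    have : (Pi.single j (x j) : Fin d → ℝ) = x j • (Pi.single j (1 : ℝ) : Fin d → ℝ) := by
      rw [← Pi.single_smul, smul_eq_mul, mul_one]
    rw [this]
    simp [hz]
  have hsum : ∑ p, w p • z p = x := by
    rw [Fintype.sum_prod_type]
    calc ∑ j : Fin d, ∑ b : Bool, w (j, b) • z (j, b)
        = ∑ j, Pi.single j (x j) := Finset.sum_congr rfl fun j _ => hkey j
      _ = x := Finset.univ_sum_single x
  have hzmem : ∀ p ∈ (Finset.univ : Finset (Fin d × Bool)), z p ∈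
      ((Set.range fun j : Fin d => Pi.single j (1 : ℝ)) ∪
        (Set.range fun j : Fin d => Pi.single j (-1 : ℝ))) := by
    rintro ⟨j, b⟩ _
    cases b
    · exact Set.mem_union_right _ ⟨j, by simp [hz]⟩
    · exact Set.mem_union_left _ ⟨j, by simp [hz]⟩
  have h := Finset.centerMass_mem_convexHull Finset.univ hw0 (by rw [hws]; norm_num) hzmem
  rwa [Finset.centerMass_eq_of_sum_1 _ _ hws, hsum] at h

/-- The crosspolytope is contained in the ℓ¹ unit ball. -/
lemma l1_of_mem_cross {d : ℕ} {x : Fin d → ℝ}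
    (hx : x ∈ convexHull ℝ ((Set.range fun j : Fin d => Pi.single j (1 : ℝ)) ∪
      (Set.range fun j : Fin d => Pi.single j (-1 : ℝ)))) : ∑ j, |x j| ≤ 1 := by
  classical
  have hconv : Convex ℝ {y : Fin d → ℝ | ∑ j, |y j| ≤ 1} := by
    intro u hu v hv a b ha hb hab
    have hterm : ∀ j, |(a • u + b • v) j| ≤ a * |u j| + b * |v j| := by
      intro j
      simp only [Pi.add_apply, Pi.smul_apply, smul_eq_mul]
      calc |a * u j + b * v j| ≤ |a * u j| + |b * v j| := abs_add_le _ _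
        _ = a * |u j| + b * |v j| := by
            rw [abs_mul, abs_mul, abs_of_nonneg ha, abs_of_nonneg hb]
    show ∑ j, |(a • u + b • v) j| ≤ 1
    calc ∑ j, |(a • u + b • v) j|
        ≤ ∑ j, (a * |u j| + b * |v j|) := Finset.sum_le_sum fun j _ => hterm j
      _ = a * ∑ j, |u j| + b * ∑ j, |v j| := by
          rw [Finset.sum_add_distrib, Finset.mul_sum, Finset.mul_sum]
      _ ≤ a * 1 + b * 1 := by
          gcongr
          · exact hu
          · exact hv
      _ = 1 := by rw [mul_one, mul_one, hab]
  have hgen : ∀ (jj : Fin d) (cc : ℝ), |cc| = 1 →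
      (∑ k, |(Pi.single jj cc : Fin d → ℝ) k|) ≤ 1 := by
    intro jj cc hcc
    have h1 : ∀ k, |(Pi.single jj cc : Fin d → ℝ) k| = if k = jj then |cc| else 0 := by
      intro k
      rcases eq_or_ne k jj with rfl | h
      · simp
      · simp [Pi.single_eq_of_ne h, h]
    rw [Finset.sum_congr rfl fun k _ => h1 k, Finset.sum_ite_eq']
    simp [hcc]
  have hsub : ((Set.range fun j : Fin d => Pi.single j (1 : ℝ)) ∪
      (Set.range fun j : Fin d => Pi.single j (-1 : ℝ))) ⊆
      {y : Fin d → ℝ | ∑ j, |y j| ≤ 1} := by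
    rintro y (⟨j, rfl⟩ | ⟨j, rfl⟩)
    · exact hgen j 1 (by norm_num)
    · exact hgen j (-1) (by norm_num)
  exact convexHull_min hsub hconv hx

lemma single_index_inj {d : ℕ} {j j' : Fin d} (h : (Pi.single j (1:ℝ) : Fin d → ℝ) = Pi.single j' (1:ℝ)) :
    j = j' := by
  by_contra hne
  have h2 := congrFun h j
  rw [Pi.single_eq_same, Pi.single_eq_of_ne hne] at h2
  exact one_ne_zero h2

/-- A subspace of dimension `d - i` admits a set of at most `i` "bad" coordinates such that
the values on the remaining coordinates can be prescribed arbitrarily. -/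
lemma exists_coord_complement (d i : ℕ) (hid : i ≤ d) (V : Submodule ℝ (Fin d → ℝ))
    (hV : Module.finrank ℝ V = d - i) :
    ∃ Jc : Finset (Fin d), Jc.card ≤ i ∧
      ∀ u : Fin d → ℝ, ∃ v ∈ V, ∀ j ∉ Jc, v j = u j := by
  classical
  obtain ⟨s, hsV, hspan, hli⟩ := exists_linearIndependent ℝ (V : Set (Fin d → ℝ))
  rw [Submodule.span_eq] at hspan
  replace hli : LinearIndepOn ℝ id s := hli
  set e : Set (Fin d → ℝ) := Set.range fun j : Fin d => Pi.single j (1 : ℝ) with he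
  have hst : s ⊆ s ∪ e := Set.subset_union_left
  set b := hli.extend hst with hb
  have hsb : s ⊆ b := hli.subset_extend hst
  have hbt : b ⊆ s ∪ e := hli.extend_subset hst
  have hbli := hli.linearIndepOn_extend hst
  have hespan : Submodule.span ℝ e = ⊤ := by
    have h1 := (Pi.basisFun ℝ (Fin d)).span_eq
    have h2 : ⇑(Pi.basisFun ℝ (Fin d)) = fun j : Fin d => Pi.single j (1 : ℝ) :=
      funext fun j => Pi.basisFun_apply ℝ (Fin d) j
    rw [he]
    rw [← h2]
    exact h1
  have hbspan : Submodule.span ℝ b = ⊤ := by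
    rw [hb, hli.span_extend_eq_span hst, Submodule.span_union, hespan]
    simp
  have hbfin : b.Finite := LinearIndependent.setFinite hbli
  have hsfin : s.Finite := hbfin.subset hsb
  have hscard : s.ncard = d - i := by
    haveI := hsfin.fintype
    have h3 := finrank_span_set_eq_card hli
    rw [hspan, hV] at h3
    rw [Set.ncard_eq_toFinset_card' s]
    exact h3.symm
  have hbcard : b.ncard = d := by
    haveI := hbfin.fintype
    have h3 := finrank_span_set_eq_card hbli
    rw [hbspan, finrank_top, Module.finrank_fin_fun] at h3
    rw [Set.ncard_eq_toFinset_card' b]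
    exact h3.symm
  have hTcard : (b \ s).ncard = i := by
    rw [Set.ncard_diff hsb hsfin, hbcard, hscard]
    omega
  have hT : b \ s ⊆ e := fun y hy => (hbt hy.1).resolve_left hy.2
  have hTfin : (b \ s).Finite := hbfin.diff (t := s)
  set Jc : Finset (Fin d) :=
    Finset.univ.filter (fun j => Pi.single j (1:ℝ) ∈ b \ s) with hJc
  have hJcard : Jc.card ≤ i := by
    have hmaps : ∀ j ∈ Jc, Pi.single j (1:ℝ) ∈ hTfin.toFinset := by
      intro j hj
      rw [Set.Finite.mem_toFinset]
      exact (Finset.mem_filter.1 hj).2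
    have hinj : Set.InjOn (fun j => Pi.single j (1:ℝ)) (↑Jc : Set (Fin d)) := by
      intro j _ j' _ h
      exact single_index_inj h
    have := Finset.card_le_card_of_injOn _ hmaps hinj
    rwa [← Set.ncard_eq_toFinset_card (b \ s) hTfin, hTcard] at this
  refine ⟨Jc, hJcard, ?_⟩
  intro u
  have hu : u ∈ Submodule.span ℝ b := by rw [hbspan]; trivial
  have hble : Submodule.span ℝ b ≤ V ⊔ Submodule.span ℝ (b \ s) := by
    apply Submodule.span_le.2
    intro y hy
    by_cases hys : y ∈ s
    · exact Submodule.mem_sup_left (hsV hys)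
    · exact Submodule.mem_sup_right (Submodule.subset_span ⟨hy, hys⟩)
  obtain ⟨v, hvV, w, hwT, huvw⟩ := Submodule.mem_sup.1 (hble hu)
  have hw0 : ∀ j ∉ Jc, w j = 0 := by
    intro j hj
    have hle : Submodule.span ℝ (b \ s) ≤
        LinearMap.ker (LinearMap.proj j : (Fin d → ℝ) →ₗ[ℝ] ℝ) := by
      apply Submodule.span_le.2
      intro y hy
      obtain ⟨j', hj'⟩ := hT hy
      have hjj' : j ≠ j' := by
        rintro rfl
        refine hj (Finset.mem_filter.2 ⟨Finset.mem_univ j, ?_⟩)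
        rw [show (Pi.single j (1:ℝ)) = y from hj']
        exact hy
      have : y j = 0 := by rw [← hj']; exact Pi.single_eq_of_ne hjj' 1
      simpa [LinearMap.mem_ker] using this
    have := hle hwT
    simpa using this
  refine ⟨v, hvV, fun j hj => ?_⟩
  rw [← huvw]
  simp [hw0 j hj]

lemma card_lt_subtype (d i : ℕ) (hid : i ≤ d) :
    Fintype.card {j : Fin d // (j : ℕ) < i} = i := by
  have e : {j : Fin d // (j : ℕ) < i} ≃ Fin i :=
    { toFun := fun j => ⟨j.1, j.2⟩
      invFun := fun k => ⟨⟨k.1, lt_of_lt_of_le k.2 hid⟩, k.2⟩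
      left_inv := fun j => rfl
      right_inv := fun k => rfl }
  rw [Fintype.card_congr e, Fintype.card_fin]

/-- The `i`-th covering minimum of the standard crosspolytope
`conv(±e_1, …, ±e_d) ⊆ ℝ^d` equals `i/2`. -/
theorem covMin_crosspolytope (d i : ℕ) (hi : 1 ≤ i) (hid : i ≤ d) :
    covMin i
        (convexHull ℝ ((Set.range fun j : Fin d => Pi.single j (1 : ℝ)) ∪
          (Set.range fun j : Fin d => Pi.single j (-1 : ℝ))))
        (intLat d) = (i : ℝ) / 2 := by
  classical
  have hd : 0 < d := lt_of_lt_of_le hi hid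
  set K : Set (Fin d → ℝ) :=
    convexHull ℝ ((Set.range fun j : Fin d => Pi.single j (1 : ℝ)) ∪
      (Set.range fun j : Fin d => Pi.single j (-1 : ℝ))) with hK
  set S : Set ℝ := {μ : ℝ | 0 ≤ μ ∧ ∀ U : AffineSubspace ℝ (Fin d → ℝ),
    (U : Set (Fin d → ℝ)).Nonempty →
    Module.finrank ℝ U.direction = Module.finrank ℝ (Fin d → ℝ) - i →
    ((μ • K + intLat d) ∩ (U : Set (Fin d → ℝ))).Nonempty} with hS
  have hi2pos : (0:ℝ) < (i:ℝ)/2 := by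
    have : (1:ℝ) ≤ (i:ℝ) := by exact_mod_cast hi
    linarith
  -- membership of i/2
  have hmem : ((i:ℝ)/2) ∈ S := by
    refine ⟨le_of_lt hi2pos, ?_⟩
    rintro U ⟨p, hp⟩ hdim
    rw [Module.finrank_fin_fun] at hdim
    obtain ⟨Jc, hJcard, hsur⟩ := exists_coord_complement d i hid U.direction hdim
    obtain ⟨v, hvV, hv⟩ := hsur (fun j => (round (p j) : ℝ) - p j)
    set x : Fin d → ℝ := v + p with hx
    have hxU : x ∈ U := by
      have := AffineSubspace.vadd_mem_of_mem_direction hvV hp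
      simpa [hx] using this
    have hxint : ∀ j ∉ Jc, x j = (round (p j) : ℝ) := by
      intro j hj
      simp only [hx, Pi.add_apply, hv j hj]
      ring
    set z : Fin d → ℝ := fun j => if j ∈ Jc then (round (x j) : ℝ) else x j with hz
    have hzL : z ∈ intLat d := by
      intro j
      by_cases hj : j ∈ Jc
      · exact ⟨round (x j), by simp [hz, hj]⟩
      · exact ⟨round (p j), by simp [hz, hj, hxint j hj]⟩
    set y : Fin d → ℝ := x - z with hy
    have hyb : ∀ j, |y j| ≤ if j ∈ Jc then (1/2 : ℝ) else 0 := by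
      intro j
      by_cases hj : j ∈ Jc
      · simpa [hy, hz, hj] using abs_sub_round (x j)
      · simp [hy, hz, hj]
    have hysum : ∑ j, |y j| ≤ (i:ℝ)/2 := by
      calc ∑ j, |y j| ≤ ∑ j, (if j ∈ Jc then (1/2:ℝ) else 0) :=
            Finset.sum_le_sum fun j _ => hyb j
        _ = (Jc.card : ℝ) * (1/2) := by
            rw [Finset.sum_ite_mem, Finset.univ_inter, Finset.sum_const, nsmul_eq_mul]
        _ ≤ (i:ℝ) * (1/2) := by
            have : (Jc.card : ℝ) ≤ (i:ℝ) := by exact_mod_cast hJcard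
            nlinarith
        _ = (i:ℝ)/2 := by ring
    have hyK : y ∈ ((i:ℝ)/2) • K := by
      rw [Set.mem_smul_set_iff_inv_smul_mem₀ (ne_of_gt hi2pos)]
      apply mem_cross_of_l1 hd
      have : ∑ j, |(((i:ℝ)/2)⁻¹ • y) j| = ((i:ℝ)/2)⁻¹ * ∑ j, |y j| := by
        rw [Finset.mul_sum]
        refine Finset.sum_congr rfl fun j _ => ?_
        rw [Pi.smul_apply, smul_eq_mul, abs_mul, abs_of_nonneg (le_of_lt (inv_pos.2 hi2pos))]
      rw [this]
      calc ((i:ℝ)/2)⁻¹ * ∑ j, |y j| ≤ ((i:ℝ)/2)⁻¹ * ((i:ℝ)/2) := by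
            have := le_of_lt (inv_pos.2 hi2pos)
            nlinarith
        _ = 1 := inv_mul_cancel₀ (ne_of_gt hi2pos)
    refine ⟨x, ⟨?_, hxU⟩⟩
    have : y + z = x := by simp [hy]
    rw [← this]
    exact Set.add_mem_add hyK hzL
  -- lower bound
  have hlb : ∀ μ ∈ S, (i:ℝ)/2 ≤ μ := by
    rintro μ ⟨hμ0, hμ⟩
    set p : Fin d → ℝ := fun j => if (j:ℕ) < i then 1/2 else 0 with hp
    set V : Submodule ℝ (Fin d → ℝ) := Submodule.span ℝ
      (Set.range fun j : {j : Fin d // ¬ (j:ℕ) < i} => (Pi.single (j : Fin d) (1:ℝ) : Fin d → ℝ)) with hV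
    set U := AffineSubspace.mk' p V with hU
    have hUne : ((U : Set (Fin d → ℝ))).Nonempty := ⟨p, AffineSubspace.self_mem_mk' p V⟩
    have hli2 : LinearIndependent ℝ
        (fun j : {j : Fin d // ¬ (j:ℕ) < i} => (Pi.single (j : Fin d) (1:ℝ) : Fin d → ℝ)) := by
      have h := (Pi.basisFun ℝ (Fin d)).linearIndependent.comp
        (Subtype.val : {j : Fin d // ¬ (j:ℕ) < i} → Fin d) Subtype.val_injective
      have heq : (fun j : {j : Fin d // ¬ (j:ℕ) < i} => (Pi.single (j : Fin d) (1:ℝ) : Fin d → ℝ)) =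
          (⇑(Pi.basisFun ℝ (Fin d)) ∘ Subtype.val) :=
        funext fun j => (Pi.basisFun_apply ℝ (Fin d) j.1).symm
      rw [heq]
      exact h
    have hdim : Module.finrank ℝ U.direction = Module.finrank ℝ (Fin d → ℝ) - i := by
      rw [hU, AffineSubspace.direction_mk', hV, finrank_span_eq_card hli2,
        Fintype.card_subtype_compl, card_lt_subtype d i hid, Module.finrank_fin_fun,
        Fintype.card_fin]
    have hVzero : ∀ q ∈ V, ∀ j : Fin d, (j:ℕ) < i → q j = 0 := by
      intro q hq j hj
      have hle : V ≤ LinearMap.ker (LinearMap.proj j : (Fin d → ℝ) →ₗ[ℝ] ℝ) := by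
        apply Submodule.span_le.2
        rintro y ⟨j', rfl⟩
        have hne : j ≠ (j' : Fin d) := by
          rintro rfl
          exact j'.2 hj
        have : (Pi.single (j' : Fin d) (1:ℝ) : Fin d → ℝ) j = 0 := Pi.single_eq_of_ne hne 1
        simpa [LinearMap.mem_ker] using this
      simpa using hle hq
    have hxval : ∀ x ∈ (U : Set (Fin d → ℝ)), ∀ j : Fin d, (j:ℕ) < i → x j = 1/2 := by
      intro x hx j hj
      have hxv : x -ᵥ p ∈ V := (AffineSubspace.mem_mk').1 hx
      have h0 : (x - p) j = 0 := hVzero _ hxv j hj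
      have : x j - p j = 0 := h0
      have hpj : p j = 1/2 := by simp [hp, hj]
      linarith [this, hpj.symm ▸ this]
    obtain ⟨x, hx1, hx2⟩ := hμ U hUne hdim
    obtain ⟨yy, hyy, zz, hzz, hyzx⟩ := Set.mem_add.1 hx1
    obtain ⟨k, hk, hky⟩ := Set.mem_smul_set.1 hyy
    have hsumk : ∑ j, |k j| ≤ 1 := l1_of_mem_cross hk
    have hterm : ∀ j ∈ Finset.univ.filter (fun j : Fin d => (j:ℕ) < i),
        (1/2:ℝ) ≤ |x j - zz j| := by
      intro j hj
      have hji : (j:ℕ) < i := (Finset.mem_filter.1 hj).2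
      obtain ⟨m, hm⟩ := hzz j
      rw [hxval x hx2 j hji, hm]
      rcases le_or_gt (m:ℝ) 0 with h | h
      · rw [abs_of_nonneg (by linarith)]; linarith
      · have h1 : (1:ℤ) ≤ m := by exact_mod_cast h
        have h1' : (1:ℝ) ≤ (m:ℝ) := by exact_mod_cast h1
        rw [abs_of_nonpos (by linarith)]; linarith
    have hcardfilter : (Finset.univ.filter (fun j : Fin d => (j:ℕ) < i)).card = i := by
      rw [← Fintype.card_subtype, card_lt_subtype d i hid]
    have hsum1 : (i:ℝ) * (1/2) ≤
        ∑ j ∈ Finset.univ.filter (fun j : Fin d => (j:ℕ) < i), |x j - zz j| := by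
      have h := Finset.card_nsmul_le_sum _ _ _ hterm
      rw [hcardfilter] at h
      simpa [nsmul_eq_mul] using h
    have hsum2 : ∑ j ∈ Finset.univ.filter (fun j : Fin d => (j:ℕ) < i), |x j - zz j| ≤
        ∑ j, |x j - zz j| := by
      apply Finset.sum_le_sum_of_subset_of_nonneg (Finset.filter_subset _ _)
      intro j _ _
      exact abs_nonneg _
    have hsum3 : ∑ j, |x j - zz j| ≤ μ := by
      have hxz : ∀ j, x j - zz j = μ * k j := by
        intro j
        have : yy j = μ * k j := by rw [← hky]; simp
        have h2 : yy j + zz j = x j := by rw [← hyzx]; simp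
        linarith
      calc ∑ j, |x j - zz j| = ∑ j, μ * |k j| := by
            refine Finset.sum_congr rfl fun j _ => ?_
            rw [hxz j, abs_mul, abs_of_nonneg hμ0]
        _ = μ * ∑ j, |k j| := by rw [Finset.mul_sum]
        _ ≤ μ * 1 := by nlinarith
        _ = μ := mul_one μ
    linarith
  -- conclude
  show sInf S = (i:ℝ)/2
  refine le_antisymm (csInf_le ⟨0, fun μ hμ => hμ.1⟩ hmem) (le_csInf ⟨_, hmem⟩ hlb)
end
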